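/- arXiv:2507.12770 — 6 statements merged into one kernel-verified Lean document; each statement's English description precedes it below -/
import Mathlib

section
/- Let n be prime, f(x) ∈ ℤ[x] an irreducible polynomial of degree n with roots α₁,...,αₙ, and c₁,...,cₙ ∈ ℚ. If the second-highest coefficient a_{n-1} of f is nonzero and c₁α₁ + ... + cₙαₙ = 0, then c₁ = c₂ = ... = cₙ = 0. In particular, α₁,...,αₙ are linearly independent over ℚ. -/
open Polynomial IntermediateField

lemma lemA {n : ℕ} (hn : n.Prime) {ω : ℂ} (hω : IsPrimitiveRoot ω n)
    (d : Fin n → ℚ) (h : ∑ j : Fin n, (d j : ℂ) * ω ^ (j : ℕ) = 0) :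
    ∀ j k : Fin n, d j = d k := by
  haveI : Fact n.Prime := ⟨hn⟩
  set P : ℚ[X] := ∑ j : Fin n, C (d j) * X ^ (j : ℕ) with hP
  have hcoeff : ∀ j : Fin n, P.coeff (j : ℕ) = d j := by
    intro j
    rw [hP, finset_sum_coeff]
    rw [Finset.sum_eq_single j]
    · simp
    · intro b _ hbj
      rw [coeff_C_mul, coeff_X_pow, if_neg (by simpa [Fin.val_injective.eq_iff, eq_comm] using hbj)]
      simp
    · simp
  have haev : aeval ω P = 0 := by
    rw [hP, map_sum]
    rw [← h]
    congr 1; funext j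
    simp [aeval_C]
  have hint : IsIntegral ℚ ω := (hω.isIntegral hn.pos).tower_top
  have hdvd : minpoly ℚ ω ∣ P := minpoly.dvd ℚ ω haev
  have hmin : minpoly ℚ ω = cyclotomic n ℚ := (cyclotomic_eq_minpoly_rat hω hn.pos).symm
  rw [hmin] at hdvd
  rcases eq_or_ne P 0 with h0 | h0
  · intro j k
    have := hcoeff j
    have h2 := hcoeff k
    rw [h0] at this h2
    simp at this h2
    rw [← this, ← h2]
  · have hdegP : P.natDegree ≤ n - 1 := by
      rw [hP]
      refine (natDegree_sum_le _ _).trans ?_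
      rw [Finset.fold_max_le]
      constructor
      · omega
      · intro j _
        refine le_trans (natDegree_C_mul_le _ _) ?_
        rw [natDegree_X_pow]
        omega
    have hdegC : (cyclotomic n ℚ).natDegree = n - 1 := by
      rw [natDegree_cyclotomic, Nat.totient_prime hn]
    obtain ⟨q, hq⟩ := hdvd
    have hC0 : cyclotomic n ℚ ≠ 0 := cyclotomic_ne_zero n ℚ
    have hq0 : q ≠ 0 := by rintro rfl; simp at hq; exact h0 hq
    have hdq : q.natDegree = 0 := by
      have := natDegree_mul hC0 hq0
      rw [← hq] at this
      omega
    obtain ⟨a, rfl⟩ : ∃ a, q = C a := ⟨q.coeff 0, eq_C_of_natDegree_eq_zero hdq⟩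
    have hall : ∀ j : Fin n, d j = a := by
      intro j
      rw [← hcoeff j, hq, coeff_mul_C, cyclotomic_prime, finset_sum_coeff]
      rw [Finset.sum_eq_single (j : ℕ)]
      · simp
      · intro b _ hbj
        rw [coeff_X_pow, if_neg (Ne.symm hbj)]
      · simp [j.isLt]
    intro j k; rw [hall j, hall k]

lemma lemMod {n : ℕ} {ζ : ℂ} (hζ : ζ ^ n = 1) {a b : ℕ} (hab : a ≡ b [MOD n]) :
    ζ ^ a = ζ ^ b := by
  conv_lhs => rw [← Nat.div_add_mod a n]
  conv_rhs => rw [← Nat.div_add_mod b n]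
  rw [pow_add, pow_add, pow_mul, pow_mul, hζ, one_pow, one_pow, one_mul, one_mul, hab]

lemma lemGeom {n : ℕ} {ζ : ℂ} (hζ : ζ ^ n = 1) (h1 : ζ ≠ 1) :
    ∑ m : Fin n, ζ ^ (m : ℕ) = 0 := by
  rw [Fin.sum_univ_eq_sum_range, geom_sum_eq h1, hζ, sub_self, zero_div]

lemma lemDFT {n : ℕ} [NeZero n] {ζ : ℂ} (hζ : ζ ^ n = 1) (u v : Fin n → ℂ)
    (hrel : ∀ k : Fin n, ∑ j : Fin n, u j * v (k + j) = 0) :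
    (∑ j : Fin n, u j * ζ ^ (j : ℕ)) * (∑ l : Fin n, v l * ζ ^ (n - (l : ℕ))) = 0 := by
  have hexp : ∀ k j : Fin n, ζ ^ ((j : ℕ) + (n - (((k + j) : Fin n) : ℕ))) = ζ ^ (n - (k : ℕ)) := by
    intro k j
    have hval : (((k + j) : Fin n) : ℕ) = ((k : ℕ) + (j : ℕ)) % n := Fin.val_add k j
    have hk := k.isLt
    have hj := j.isLt
    rcases Nat.lt_or_ge ((k : ℕ) + (j : ℕ)) n with hlt | hge
    · rw [hval, Nat.mod_eq_of_lt hlt]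
      congr 1
      omega
    · have hmod : ((k : ℕ) + (j : ℕ)) % n = (k : ℕ) + (j : ℕ) - n := by
        rw [Nat.mod_eq_sub_mod hge, Nat.mod_eq_of_lt (by omega)]
      rw [hval, hmod]
      have he : (j : ℕ) + (n - ((k : ℕ) + (j : ℕ) - n)) = n + (n - (k : ℕ)) := by omega
      rw [he, pow_add, hζ, one_mul]
  have key : ∀ j : Fin n, ∑ l : Fin n, (u j * ζ ^ (j : ℕ)) * (v l * ζ ^ (n - (l : ℕ)))
      = ∑ k : Fin n, ζ ^ (n - (k : ℕ)) * (u j * v (k + j)) := by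
    intro j
    refine (Fintype.sum_equiv (Equiv.addRight j) _ _ ?_).symm
    intro k
    show ζ ^ (n - (k : ℕ)) * (u j * v (k + j)) = (u j * ζ ^ (j : ℕ)) * (v (k + j) * ζ ^ (n - (((k + j) : Fin n) : ℕ)))
    rw [mul_mul_mul_comm, ← pow_add, hexp k j]
    ring
  rw [Finset.sum_mul_sum]
  rw [Finset.sum_congr rfl (fun j _ => key j), Finset.sum_comm]
  refine Finset.sum_eq_zero fun k _ => ?_
  rw [← Finset.mul_sum, hrel k, mul_zero]

lemma key (n : ℕ) (hn : n.Prime) (f : Polynomial ℚ) (hirr : Irreducible f)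
    (hmonic : f.Monic) (hdeg : f.natDegree = n) (α : Fin n → ℂ)
    (hroots : (f.map (algebraMap ℚ ℂ)).roots = (List.ofFn α : Multiset ℂ))
    (ha : f.coeff (n - 1) ≠ 0) :
    ∀ c : Fin n → ℚ, (∑ i, (c i : ℂ) * α i = 0) → ∀ i, c i = 0 := by
  haveI : Fact n.Prime := ⟨hn⟩
  haveI : NeZero n := ⟨hn.ne_zero⟩
  have hn2 : 2 ≤ n := hn.two_le
  have hf0 : f ≠ 0 := hmonic.ne_zero
  have hsep : f.Separable := hirr.separable
  have hαinj : Function.Injective α := by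
    have hnd : (f.map (algebraMap ℚ ℂ)).roots.Nodup := nodup_roots (hsep.map)
    rw [hroots] at hnd
    exact List.nodup_ofFn.mp (by exact_mod_cast hnd)
  set F := f.SplittingField with hF
  haveI : IsSplittingField ℚ F f := Polynomial.IsSplittingField.splittingField f
  have hsplitsC : (f.map (algebraMap ℚ ℂ)).Splits := IsAlgClosed.splits _
  let φ : F →ₐ[ℚ] ℂ := IsSplittingField.lift F f hsplitsC
  have hφinj : Function.Injective φ := φ.toRingHom.injective
  set rootsF := (f.map (algebraMap ℚ F)).roots with hrootsF
  have hmap : Multiset.map (φ : F →+* ℂ) rootsF = (List.ofFn α : Multiset ℂ) := by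
    have h1 : (f.map (algebraMap ℚ F)).Splits :=
      (IsSplittingField.splits F f)
    have h2 := h1.roots_map (φ : F →+* ℂ)
    rw [Polynomial.map_map, AlgHom.comp_algebraMap, hroots] at h2
    exact h2.symm
  have hex : ∀ i, ∃ b, b ∈ rootsF ∧ (φ : F →+* ℂ) b = α i := by
    intro i
    have h1 : α i ∈ Multiset.map (φ : F →+* ℂ) rootsF := by
      rw [hmap]
      have : α i ∈ List.ofFn α := List.mem_ofFn.mpr ⟨i, rfl⟩
      exact_mod_cast this
    exact Multiset.mem_map.mp h1
  choose a hamem haφ using hex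
  have hainj : Function.Injective a := fun i j hij => hαinj (by rw [← haφ i, ← haφ j, hij])
  have hasurj : ∀ b ∈ rootsF, ∃ i, a i = b := by
    intro b hb
    have h1 : (φ b) ∈ (List.ofFn α : Multiset ℂ) := by
      rw [← hmap]; exact Multiset.mem_map_of_mem _ hb
    rw [Multiset.mem_coe] at h1
    obtain ⟨i, hi⟩ := List.mem_ofFn.mp h1
    exact ⟨i, hφinj ((haφ i).trans hi)⟩
  have haroot : ∀ i, aeval (a i) f = 0 := by
    intro i
    have h1 := (mem_roots'.mp (hamem i)).2
    rwa [IsRoot, eval_map, ← aeval_def] at h1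
  haveI : IsGalois ℚ F := IsGalois.of_separable_splitting_field hsep
  have hdvdn : n ∣ Module.finrank ℚ F := by
    have hint : IsIntegral ℚ (a 0) := IsIntegral.of_finite ℚ (a 0)
    have hmin : minpoly ℚ (a 0) = f :=
      (minpoly.eq_of_irreducible_of_monic hirr (haroot 0) hmonic).symm
    have h1 : Module.finrank ℚ ℚ⟮a 0⟯ = n := by
      rw [IntermediateField.adjoin.finrank hint, hmin, hdeg]
    have h2 := Module.finrank_mul_finrank ℚ ℚ⟮a 0⟯ F
    exact ⟨_, by rw [← h2, h1]⟩
  obtain ⟨σ, hσ⟩ := exists_prime_orderOf_dvd_card (G := F ≃ₐ[ℚ] F) n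
    (by rw [← Nat.card_eq_fintype_card, IsGalois.card_aut_eq_finrank]; exact hdvdn)
  have hσn : σ ^ n = 1 := by rw [← hσ]; exact pow_orderOf_eq_one σ
  have hσroot : ∀ i, ∃ j, a j = σ (a i) := by
    intro i
    apply hasurj
    rw [mem_roots', IsRoot, eval_map, ← aeval_def]
    refine ⟨Polynomial.map_ne_zero hf0, ?_⟩
    have h2 : aeval (σ (a i)) f = σ (aeval (a i) f) := aeval_algHom_apply σ.toAlgHom (a i) f
    rw [h2, haroot i, map_zero]
  choose q hq using hσroot
  have hqinj : Function.Injective q := by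
    intro i j hij
    apply hainj
    apply σ.injective
    rw [← hq i, ← hq j, hij]
  let p : Equiv.Perm (Fin n) := Equiv.ofBijective q (Finite.injective_iff_bijective.mp hqinj)
  have hpa : ∀ i, a (p i) = σ (a i) := hq
  have hpka : ∀ (k : ℕ) (i : Fin n), a ((p ^ k) i) = (σ ^ k) (a i) := by
    intro k
    induction k with
    | zero => intro i; simp
    | succ k ih =>
      intro i
      rw [pow_succ, pow_succ, Equiv.Perm.mul_apply, AlgEquiv.mul_apply, ih (p i), hpa i]
  have hpn : p ^ n = 1 := by
    apply Equiv.ext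
    intro i
    have h1 := hpka n i
    rw [hσn, AlgEquiv.one_apply] at h1
    rw [Equiv.Perm.one_apply]
    exact hainj h1
  have hp1 : p ≠ 1 := by
    intro h
    have hfix : ∀ x ∈ f.rootSet F, σ x = x := by
      intro x hx
      have hxr : x ∈ rootsF := by
        rw [mem_rootSet'] at hx
        rw [mem_roots', IsRoot, eval_map, ← aeval_def]
        exact ⟨hx.1, hx.2⟩
      obtain ⟨i, rfl⟩ := hasurj x hxr
      have := hpa i
      rw [h, Equiv.Perm.one_apply] at this
      exact this.symm
    have hone : σ = 1 := Polynomial.Gal.ext (p := f) hfix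
    rw [hone, orderOf_one] at hσ
    omega
  have hop : orderOf p = n := by
    have h1 : orderOf p ∣ n := orderOf_dvd_of_pow_eq_one hpn
    rcases hn.eq_one_or_self_of_dvd _ h1 with h | h
    · exact absurd (orderOf_eq_one_iff.mp h) hp1
    · exact h
  obtain ⟨i₀, hi₀⟩ : ∃ i, p i ≠ i := by
    by_contra h
    push_neg at h
    exact hp1 (Equiv.ext h)
  have hfree : ∀ k : ℕ, 0 < k → k < n → (p ^ k) i₀ ≠ i₀ := by
    intro k hk0 hkn hfix
    have hcop : Nat.Coprime k n :=
      Nat.coprime_comm.mp ((hn.coprime_iff_not_dvd).mpr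
        (fun hdvd => absurd (Nat.le_of_dvd hk0 hdvd) (by omega)))
    obtain ⟨u, -, hu⟩ := Nat.exists_mul_mod_eq_one_of_coprime hcop (by omega)
    have hfix2 : ∀ m : ℕ, ((p ^ k) ^ m) i₀ = i₀ := by
      intro m
      induction m with
      | zero => simp
      | succ m ih => rw [pow_succ, Equiv.Perm.mul_apply, hfix, ih]
    have h2 : (p ^ (k * u)) i₀ = i₀ := by rw [pow_mul]; exact hfix2 u
    rw [← pow_mod_orderOf, hop, hu, pow_one] at h2
    exact hi₀ h2
  set e : Fin n → Fin n := fun j => (p ^ (j : ℕ)) i₀ with he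
  have hecomm : ∀ s t : ℕ, (p ^ s) ((p ^ t) i₀) = (p ^ t) ((p ^ s) i₀) := by
    intro s t
    rw [← Equiv.Perm.mul_apply, ← Equiv.Perm.mul_apply, ← pow_add, ← pow_add, Nat.add_comm]
  have heinj : Function.Injective e := by
    have haux : ∀ j j' : Fin n, (j : ℕ) ≤ (j' : ℕ) → e j = e j' → j = j' := by
      intro j j' hle hjj'
      have h1 : (p ^ ((j' : ℕ) - (j : ℕ))) ((p ^ (j : ℕ)) i₀) = (p ^ (j : ℕ)) i₀ := by
        rw [← Equiv.Perm.mul_apply, ← pow_add, Nat.sub_add_cancel hle]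
        exact hjj'.symm
      rw [hecomm] at h1
      have h2 : (p ^ ((j' : ℕ) - (j : ℕ))) i₀ = i₀ := (p ^ (j : ℕ)).injective h1
      rcases Nat.eq_zero_or_pos ((j' : ℕ) - (j : ℕ)) with h | h
      · exact Fin.ext (by omega)
      · exact absurd h2 (hfree _ h (by have := j'.isLt; omega))
    intro j j' hjj'
    rcases le_or_gt (j : ℕ) (j' : ℕ) with h | h
    · exact haux j j' h hjj'
    · exact (haux j' j (by omega) hjj'.symm).symm
  have hebij : Function.Bijective e := Finite.injective_iff_bijective.mp heinj
  let eE : Fin n ≃ Fin n := Equiv.ofBijective e hebij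
  have hpe : ∀ k j : Fin n, (p ^ (k : ℕ)) (e j) = e (k + j) := by
    intro k j
    show (p ^ (k : ℕ)) ((p ^ (j : ℕ)) i₀) = (p ^ ((k + j : Fin n) : ℕ)) i₀
    rw [Fin.val_add]
    have hmo := pow_mod_orderOf p ((k : ℕ) + (j : ℕ))
    rw [hop] at hmo
    rw [hmo, pow_add, Equiv.Perm.mul_apply]
  intro c hc
  have hS : (∑ i, algebraMap ℚ F (c i) * a i) = 0 := by
    apply hφinj
    rw [map_sum, map_zero, ← hc]
    refine Finset.sum_congr rfl fun i _ => ?_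
    rw [map_mul, AlgHom.commutes]
    rw [show (φ : F →ₐ[ℚ] ℂ) (a i) = α i from haφ i]
    norm_num
  have hrelk : ∀ k : ℕ, ∑ i, (c i : ℂ) * α ((p ^ k) i) = 0 := by
    intro k
    have h1 : (σ ^ k) (∑ i, algebraMap ℚ F (c i) * a i) = 0 := by rw [hS, map_zero]
    rw [map_sum] at h1
    have h2 : ∑ i, algebraMap ℚ F (c i) * a ((p ^ k) i) = 0 := by
      rw [← h1]
      refine Finset.sum_congr rfl fun i _ => ?_
      rw [map_mul, AlgEquiv.commutes, hpka k i]
    have h3 := congrArg φ h2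
    rw [map_sum, map_zero] at h3
    rw [← h3]
    refine Finset.sum_congr rfl fun i _ => ?_
    rw [map_mul, AlgHom.commutes]
    rw [show (φ : F →ₐ[ℚ] ℂ) (a ((p ^ k) i)) = α ((p ^ k) i) from haφ _]
    norm_num
  set d : Fin n → ℚ := fun j => c (e j) with hd
  set β : Fin n → ℂ := fun j => α (e j) with hβ
  have hβinj : Function.Injective β := fun i j hij => heinj (hαinj hij)
  have hrel : ∀ k : Fin n, ∑ j, (d j : ℂ) * β (k + j) = 0 := by
    intro k
    have h1 := hrelk (k : ℕ)
    rw [← Equiv.sum_comp eE (fun i => (c i : ℂ) * α ((p ^ (k : ℕ)) i))] at h1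
    rw [← h1]
    refine Finset.sum_congr rfl fun j _ => ?_
    show (d j : ℂ) * β (k + j) = (c (e j) : ℂ) * α ((p ^ (k : ℕ)) (e j))
    rw [hpe k j]
  set ω : ℂ := Complex.exp (2 * Real.pi * Complex.I / n) with hωdef
  have hω : IsPrimitiveRoot ω n := Complex.isPrimitiveRoot_exp n (NeZero.ne n)
  have hωn : ∀ m : ℕ, (ω ^ m) ^ n = 1 := fun m => by
    rw [← pow_mul, Nat.mul_comm, pow_mul, hω.pow_eq_one, one_pow]
  have hDB : ∀ m : ℕ,
      (∑ j : Fin n, (d j : ℂ) * (ω ^ m) ^ (j : ℕ)) *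
        (∑ l : Fin n, β l * (ω ^ m) ^ (n - (l : ℕ))) = 0 :=
    fun m => lemDFT (hωn m) _ _ hrel
  have hβsum : ∑ l : Fin n, β l = -(f.coeff (n - 1) : ℂ) := by
    have h1 : ∑ l : Fin n, β l = ∑ i : Fin n, α i := Equiv.sum_comp eE α
    have h2 : ((f.map (algebraMap ℚ ℂ)).roots).sum = ∑ i, α i := by
      rw [hroots]
      rw [Multiset.sum_coe, List.sum_ofFn]
    have h3 := Splits.nextCoeff_eq_neg_sum_roots_of_monic hsplitsC
      (hmonic.map (algebraMap ℚ ℂ))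
    have h4 : (f.map (algebraMap ℚ ℂ)).nextCoeff = (f.coeff (n - 1) : ℂ) := by
      rw [nextCoeff_of_natDegree_pos (by rw [natDegree_map, hdeg]; omega),
        natDegree_map, hdeg, coeff_map]
      norm_num
    rw [h4] at h3
    rw [h1, ← h2, h3, neg_neg]
  have hβne : ∑ l : Fin n, β l ≠ 0 := by
    rw [hβsum, neg_ne_zero]
    exact_mod_cast ha
  have hd0 : ∑ j, d j = 0 := by
    have h1 := hDB 0
    simp only [pow_zero, one_pow, mul_one] at h1
    rcases mul_eq_zero.mp h1 with h | h
    · exact_mod_cast (by push_cast at h; exact_mod_cast h : ((∑ j, d j : ℚ) : ℂ) = 0)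
    · exact absurd h hβne
  by_cases hcase : ∃ m : ℕ, 0 < m ∧ m < n ∧ ∑ j : Fin n, (d j : ℂ) * (ω ^ m) ^ (j : ℕ) = 0
  · obtain ⟨m, hm0, hmn, hDm⟩ := hcase
    have hprim : IsPrimitiveRoot (ω ^ m) n :=
      hω.pow_of_coprime m (Nat.coprime_comm.mp ((hn.coprime_iff_not_dvd).mpr
        (fun hdvd => absurd (Nat.le_of_dvd hm0 hdvd) (by omega))))
    have hall := lemA hn hprim d hDm
    have hzero : ∀ j, d j = 0 := by
      intro j
      have hsum : ∑ k : Fin n, d j = 0 := by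
        rw [← hd0]
        exact Finset.sum_congr rfl fun k _ => (hall j k)
      rw [Finset.sum_const, Finset.card_univ, Fintype.card_fin, nsmul_eq_mul] at hsum
      have hnne : (n : ℚ) ≠ 0 := Nat.cast_ne_zero.mpr hn.ne_zero
      exact (mul_eq_zero.mp hsum).resolve_left hnne
    intro i
    obtain ⟨j, hj⟩ := hebij.2 i
    rw [← hj]
    exact hzero j
  · exfalso
    push_neg at hcase
    have hBm : ∀ m : ℕ, 0 < m → m < n → ∑ l : Fin n, β l * (ω ^ m) ^ (n - (l : ℕ)) = 0 := by
      intro m h1 h2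
      exact (mul_eq_zero.mp (hDB m)).resolve_left (hcase m h1 h2)
    have hT : ∀ l : Fin n, (n : ℂ) * β l = ∑ t : Fin n, β t := by
      intro l
      have hswap : ∀ m : Fin n,
          (ω ^ (m : ℕ)) ^ (l : ℕ) * (∑ t : Fin n, β t * (ω ^ (m : ℕ)) ^ (n - (t : ℕ)))
            = ∑ t : Fin n, β t * (ω ^ ((l : ℕ) + (n - (t : ℕ)))) ^ (m : ℕ) := by
        intro m
        rw [Finset.mul_sum]
        refine Finset.sum_congr rfl fun t _ => ?_
        have hx : (ω ^ ((l : ℕ) + (n - (t : ℕ)))) ^ (m : ℕ)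
            = ω ^ ((m : ℕ) * (l : ℕ)) * ω ^ ((m : ℕ) * (n - (t : ℕ))) := by
          rw [← pow_mul, ← pow_add, ← Nat.mul_add, Nat.mul_comm]
        rw [hx, ← pow_mul, ← pow_mul]
        ring
      have hway1 : ∑ m : Fin n, (ω ^ (m : ℕ)) ^ (l : ℕ) *
          (∑ t : Fin n, β t * (ω ^ (m : ℕ)) ^ (n - (t : ℕ))) = ∑ t : Fin n, β t := by
        rw [Finset.sum_eq_single (0 : Fin n)]
        · simp
        · intro m _ hm
          have hm0 : 0 < (m : ℕ) := by
            rcases Nat.eq_zero_or_pos (m : ℕ) with h | h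
            · exact absurd (Fin.ext h) hm
            · exact h
          rw [hBm (m : ℕ) hm0 m.isLt, mul_zero]
        · simp
      have hway2 : ∑ m : Fin n, (ω ^ (m : ℕ)) ^ (l : ℕ) *
          (∑ t : Fin n, β t * (ω ^ (m : ℕ)) ^ (n - (t : ℕ))) = (n : ℂ) * β l := by
        rw [Finset.sum_congr rfl fun m _ => hswap m, Finset.sum_comm]
        rw [Finset.sum_eq_single l]
        · rw [← Finset.mul_sum]
          have : (l : ℕ) + (n - (l : ℕ)) = n := by have := l.isLt; omega
          rw [this, hω.pow_eq_one]
          simp [mul_comm]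
        · intro t _ htl
          rw [← Finset.mul_sum]
          have hne1 : ω ^ ((l : ℕ) + (n - (t : ℕ))) ≠ 1 := by
            rw [Ne, hω.pow_eq_one_iff_dvd]
            intro hdvd
            have ht := t.isLt
            have hl := l.isLt
            have : (l : ℕ) + (n - (t : ℕ)) = n :=
              Nat.eq_of_dvd_of_lt_two_mul (by omega) hdvd (by omega)
            have : (l : ℕ) = (t : ℕ) := by omega
            exact htl (Fin.ext this.symm)
          rw [lemGeom (hωn _) hne1, mul_zero]
        · simp
      rw [← hway1, hway2]
    have hβ01 : β ⟨0, by omega⟩ = β ⟨1, by omega⟩ := by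
      have h1 := hT ⟨0, by omega⟩
      have h2 := hT ⟨1, by omega⟩
      have hnne : (n : ℂ) ≠ 0 := Nat.cast_ne_zero.mpr hn.ne_zero
      exact mul_left_cancel₀ hnne (h1.trans h2.symm)
    have h01 := hβinj hβ01
    have : (0 : ℕ) = 1 := congrArg Fin.val h01
    omega

/-- Let n be prime, f irreducible of degree n with roots α₁,...,αₙ, and
c₁,...,cₙ ∈ ℚ. If a_{n-1} ≠ 0 and ∑ cᵢαᵢ = 0 then all cᵢ = 0; in particular the roots
are linearly independent over ℚ. -/
theorem stmt_0 (n : ℕ) (hn : n.Prime) (f : Polynomial ℚ) (hirr : Irreducible f)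
    (hmonic : f.Monic) (hdeg : f.natDegree = n) (α : Fin n → ℂ)
    (hroots : (f.map (algebraMap ℚ ℂ)).roots = (List.ofFn α : Multiset ℂ))
    (ha : f.coeff (n - 1) ≠ 0) (c : Fin n → ℚ)
    (hc : ∑ i, (c i : ℂ) * α i = 0) :
    (∀ i, c i = 0) ∧ LinearIndependent ℚ α := by
  have hkey := key n hn f hirr hmonic hdeg α hroots ha
  refine ⟨hkey c hc, ?_⟩
  rw [Fintype.linearIndependent_iff]
  intro g hg
  apply hkey g
  rw [← hg]
  refine Finset.sum_congr rfl fun i _ => ?_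
  rw [Rat.smul_def]
end

section
/- Let n be prime and f(x) ∈ ℤ[x] a monic irreducible polynomial of degree n with roots α₁,...,αₙ and coefficient a_{n-1} of x^{n-1} equal to 0. Then α₁,...,α_{n-1} are linearly independent over ℚ and αₙ = -(α₁ + ... + α_{n-1}); thus the ℚ-span of {α₁,...,αₙ} has dimension n-1. -/
open Polynomial Finset

variable {K : Type*} [Field K] [Algebra ℚ K]

/-- Pairing between the group algebra `ℚ[ZMod n]` and `K` via `γ`. -/
noncomputable def Lpair (n : ℕ) (γ : ZMod n → K) : AddMonoidAlgebra ℚ (ZMod n) →ₗ[ℚ] K :=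
  Finsupp.lsum ℚ (fun m => LinearMap.toSpanSingleton ℚ K (γ m)) ∘ₗ
    (AddMonoidAlgebra.coeffLinearEquiv ℚ).toLinearMap

lemma Lpair_single (n : ℕ) (γ : ZMod n → K) (m : ZMod n) (q : ℚ) :
    Lpair n γ (AddMonoidAlgebra.single m q) = q • γ m := by
  rw [Lpair, LinearMap.comp_apply]
  erw [Finsupp.lsum_single]
  rfl

lemma smul_sum_zero {ι : Type*} {M : Type*} [AddCommMonoid M] [Module ℚ M]
    {s : Finset ι} (f : ι → M) (q : ℚ) (h : ∑ i ∈ s, f i = 0) :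
    ∑ i ∈ s, q • f i = 0 := by
  rw [← Finset.smul_sum, h, smul_zero]

lemma key_lemma (n : ℕ) [NeZero n] (hn : n.Prime) (γ : ZMod n → K)
    (hγ : ∀ m, γ m ≠ 0)
    (htrace : ∑ m : ZMod n, γ m = 0)
    (hshift : ∀ d : ZMod n → ℚ, ∑ m : ZMod n, d m • γ m = 0 →
      ∑ m : ZMod n, d m • γ (m + 1) = 0)
    (d : ZMod n → ℚ) (hrel : ∑ m : ZMod n, d m • γ m = 0) :
    ∀ m m', d m = d m' := by
  haveI : Fact n.Prime := ⟨hn⟩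
  -- shifted relations
  have hshiftN : ∀ (k : ℕ), ∑ m : ZMod n, d m • γ (m + k) = 0 := by
    intro k
    induction k with
    | zero => simpa using hrel
    | succ k ih =>
      have h1 : ∑ m : ZMod n, (fun m => d (m - k)) m • γ m = 0 := by
        rw [← Equiv.sum_comp (Equiv.addRight (k : ZMod n))
          (fun m => (fun m => d (m - (k:ZMod n))) m • γ m)]
        simpa using ih
      have h2 := hshift _ h1
      rw [← Equiv.sum_comp (Equiv.addRight (k : ZMod n))
        (fun m => d (m - (k:ZMod n)) • γ (m + 1))] at h2
      push_cast
      simpa [add_assoc, add_comm (1:ZMod n)] using h2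
  have hshiftZ : ∀ (m' : ZMod n), ∑ m : ZMod n, d m • γ (m + m') = 0 := by
    intro m'
    have := hshiftN m'.val
    rwa [ZMod.natCast_val, ZMod.cast_id] at this
  -- the group algebra
  classical
  let u : AddMonoidAlgebra ℚ (ZMod n) := AddMonoidAlgebra.single (1 : ZMod n) (1 : ℚ)
  have hu : ∀ k : ℕ, u ^ k = AddMonoidAlgebra.single ((k : ZMod n)) (1 : ℚ) := by
    intro k
    rw [AddMonoidAlgebra.single_pow]
    simp [nsmul_eq_mul]
  let Cd : ℚ[X] := ∑ m : ZMod n, Polynomial.C (d m) * X ^ m.val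
  let T : ℚ[X] := Polynomial.cyclotomic n ℚ
  have hT : T = ∑ i ∈ Finset.range n, X ^ i := Polynomial.cyclotomic_prime ℚ n
  have hΦC : aeval u Cd = ∑ m : ZMod n, AddMonoidAlgebra.single m (d m) := by
    rw [map_sum]
    refine Finset.sum_congr rfl fun m _ => ?_
    rw [map_mul, aeval_C, map_pow, aeval_X, hu]
    rw [ZMod.natCast_val, ZMod.cast_id]
    rw [show (algebraMap ℚ (AddMonoidAlgebra ℚ (ZMod n))) (d m)
        = AddMonoidAlgebra.single 0 (d m) from rfl]
    rw [AddMonoidAlgebra.single_mul_single]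
    simp
  have hΦT : aeval u T = ∑ m : ZMod n, AddMonoidAlgebra.single m (1:ℚ) := by
    rw [hT, map_sum]
    refine Finset.sum_nbij' (fun i => ((i : ZMod n))) (fun m => m.val) ?_ ?_ ?_ ?_ ?_
    · intro a _; exact Finset.mem_univ _
    · intro m _; exact Finset.mem_range.2 (ZMod.val_lt m)
    · intro a ha; exact ZMod.val_natCast_of_lt (Finset.mem_range.1 ha)
    · intro m _; exact ZMod.natCast_rightInverse m
    · intro a _
      rw [map_pow, aeval_X, hu]
  -- relation ideal facts
  have hsingleC : ∀ (m' : ZMod n) (q : ℚ),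
      Lpair n γ (AddMonoidAlgebra.single m' q * aeval u Cd) = 0 := by
    intro m' q
    rw [hΦC, Finset.mul_sum]
    simp_rw [AddMonoidAlgebra.single_mul_single]
    rw [map_sum]
    simp_rw [Lpair_single, mul_smul, fun m => add_comm m' m]
    exact smul_sum_zero _ q (hshiftZ m')
  have hsingleT : ∀ (m' : ZMod n) (q : ℚ),
      Lpair n γ (AddMonoidAlgebra.single m' q * aeval u T) = 0 := by
    intro m' q
    rw [hΦT, Finset.mul_sum]
    simp_rw [AddMonoidAlgebra.single_mul_single]
    rw [map_sum]
    simp_rw [Lpair_single, mul_one]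
    refine smul_sum_zero (fun x => γ (m' + x)) q ?_
    have h2 : ∑ x : ZMod n, γ ((Equiv.addLeft m') x) = ∑ x : ZMod n, γ x :=
      Equiv.sum_comp (Equiv.addLeft m') γ
    rw [show (∑ x : ZMod n, γ (m' + x)) = ∑ x : ZMod n, γ ((Equiv.addLeft m') x) from
      Finset.sum_congr rfl fun x _ => by simp, h2, htrace]
  have hmulC : ∀ b : AddMonoidAlgebra ℚ (ZMod n), Lpair n γ (b * aeval u Cd) = 0 := by
    intro b
    induction b using AddMonoidAlgebra.induction with
    | zero => simp
    | single_add m' q f _ _ ih =>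
      rw [add_mul, map_add, ih, add_zero]
      exact hsingleC m' q
  have hmulT : ∀ b : AddMonoidAlgebra ℚ (ZMod n), Lpair n γ (b * aeval u T) = 0 := by
    intro b
    induction b using AddMonoidAlgebra.induction with
    | zero => simp
    | single_add m' q f _ _ ih =>
      rw [add_mul, map_add, ih, add_zero]
      exact hsingleT m' q
  -- coefficients of Cd
  have hcoeffC : ∀ m : ZMod n, Cd.coeff m.val = d m := by
    intro m
    rw [Polynomial.finset_sum_coeff]
    simp_rw [Polynomial.coeff_C_mul, Polynomial.coeff_X_pow]
    rw [Finset.sum_eq_single m]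
    · simp
    · intro m' _ hne
      have hvne : m.val ≠ m'.val := fun h => hne (ZMod.val_injective n h.symm)
      simp [hvne]
    · simp
  by_cases hdvd : T ∣ Cd
  · -- Cd = t • T, so d is constant
    obtain ⟨q, hq⟩ := hdvd
    have hdegT : T.natDegree = n - 1 := by
      rw [Polynomial.natDegree_cyclotomic, Nat.totient_prime hn]
    have hdegC : Cd.natDegree ≤ n - 1 := by
      refine Polynomial.natDegree_sum_le_of_forall_le _ _ fun m _ => ?_
      refine le_trans (Polynomial.natDegree_C_mul_le _ _) ?_
      rw [Polynomial.natDegree_X_pow]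
      have := ZMod.val_lt m
      omega
    by_cases hq0 : q = 0
    · have hC0 : Cd = 0 := by rw [hq, hq0, mul_zero]
      intro m m'
      rw [← hcoeffC m, ← hcoeffC m', hC0, Polynomial.coeff_zero, Polynomial.coeff_zero]
    · have hT0 : T ≠ 0 := Polynomial.cyclotomic_ne_zero n ℚ
      have : Cd.natDegree = T.natDegree + q.natDegree := by
        rw [hq, Polynomial.natDegree_mul hT0 hq0]
      have hq_deg : q.natDegree = 0 := by omega
      obtain ⟨t, ht⟩ := Polynomial.natDegree_eq_zero.1 hq_deg
      have hcoeffT : ∀ m : ZMod n, T.coeff m.val = 1 := by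
        intro m
        rw [hT, Polynomial.finset_sum_coeff]
        simp_rw [Polynomial.coeff_X_pow]
        rw [Finset.sum_eq_single m.val]
        · simp
        · intro i _ hne; simp [Ne.symm hne]
        · intro h; exact absurd (Finset.mem_range.2 (ZMod.val_lt m)) h
      intro m m'
      rw [← hcoeffC m, ← hcoeffC m', hq, ← ht]
      rw [Polynomial.coeff_mul_C, Polynomial.coeff_mul_C, hcoeffT, hcoeffT]
  · -- coprime case: contradiction with γ ≠ 0
    exfalso
    have hcop : IsCoprime T Cd :=
      ((Polynomial.cyclotomic.irreducible_rat hn.pos).coprime_iff_not_dvd).2 hdvd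
    obtain ⟨a, b, hab⟩ := hcop
    apply hγ 0
    have h1 : Lpair n γ (AddMonoidAlgebra.single (0 : ZMod n) 1 * aeval u (a * T + b * Cd))
        = γ 0 := by
      rw [hab, map_one, mul_one, Lpair_single, one_smul]
    have e1 : aeval u (a * T + b * Cd) = aeval u a * aeval u T + aeval u b * aeval u Cd := by
      rw [map_add, map_mul, map_mul]
    rw [e1, mul_add, ← mul_assoc, ← mul_assoc, map_add, hmulT, hmulC, add_zero] at h1
    exact h1.symm



lemma roots_constant (n : ℕ) (hn : n.Prime) (f : Polynomial ℚ) (hirr : Irreducible f)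
    (hmonic : f.Monic) (hdeg : f.natDegree = n) (α : Fin n → ℂ)
    (hroots : (f.map (algebraMap ℚ ℂ)).roots = (List.ofFn α : Multiset ℂ))
    (ha : f.coeff (n - 1) = 0) :
    ∀ c : Fin n → ℚ, ∑ i : Fin n, c i • α i = 0 → ∀ i j, c i = c j := by
  classical
  haveI : Fact n.Prime := ⟨hn⟩
  haveI : NeZero n := ⟨hn.ne_zero⟩
  have hn2 : 2 ≤ n := hn.two_le
  have hf0 : f ≠ 0 := hmonic.ne_zero
  have hsep : f.Separable := hirr.separable
  set K := f.SplittingField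
  haveI : Polynomial.IsSplittingField ℚ K f :=
    by convert Polynomial.IsSplittingField.splittingField f; exact Subsingleton.elim _ _
  have hsplC : (f.map (algebraMap ℚ ℂ)).Splits := IsAlgClosed.splits _
  let ψ : K →ₐ[ℚ] ℂ := Polynomial.IsSplittingField.lift K f hsplC
  have hψinj : Function.Injective ψ := RingHom.injective (ψ : K →+* ℂ)
  set fK := f.map (algebraMap ℚ K) with hfK
  have hsplK : fK.Splits :=
    (Polynomial.IsSplittingField.splits K f)
  have hmapmap : f.map (algebraMap ℚ ℂ) = fK.map (ψ : K →+* ℂ) := by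
    rw [hfK, Polynomial.map_map, ψ.comp_algebraMap]
  have hrootsmap : (f.map (algebraMap ℚ ℂ)).roots = fK.roots.map ψ := by
    rw [hmapmap, hsplK.roots_map]
    rfl
  -- choose β
  have hαroot : ∀ i, α i ∈ fK.roots.map ψ := by
    intro i
    rw [← hrootsmap, hroots]
    exact Multiset.mem_coe.2 ((List.mem_ofFn (f := α)).2 ⟨i, rfl⟩)
  choose β hβmem hβψ using fun i => Multiset.mem_map.1 (hαroot i)
  -- basic facts about α and β
  have hαnodup : (List.ofFn α).Nodup := by
    have := Polynomial.nodup_roots (hsep.map (f := algebraMap ℚ ℂ))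
    rwa [hroots] at this
  have hαinj : Function.Injective α := List.nodup_ofFn.1 hαnodup
  have hβinj : Function.Injective β := by
    intro i j h
    exact hαinj (by rw [← hβψ, ← hβψ, h])
  have hfKmonic : fK.Monic := hmonic.map _
  have hfKdeg : fK.natDegree = n := by rw [hfK, hmonic.natDegree_map, hdeg]
  have hcard : Multiset.card fK.roots = n := by
    rw [← hfKdeg]; exact (Polynomial.splits_iff_card_roots).1 hsplK
  have hβroots : fK.roots = (List.ofFn β : Multiset K) := by
    symm
    apply Multiset.eq_of_le_of_card_le
    · rw [Multiset.le_iff_subset]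
      · intro x hx
        obtain ⟨i, rfl⟩ := (List.mem_ofFn (f := β) (a := x)).1 (Multiset.mem_coe.1 hx)
        exact hβmem i
      · exact Multiset.coe_nodup.2 (List.nodup_ofFn.2 hβinj)
    · rw [hcard]
      simp
  have hβsurj : ∀ x ∈ fK.roots, ∃ i, β i = x := by
    intro x hx
    rw [hβroots] at hx
    obtain ⟨i, h⟩ := (List.mem_ofFn (f := β) (a := x)).1 (Multiset.mem_coe.1 hx)
    exact ⟨i, h⟩
  have hβrootf : ∀ i, Polynomial.aeval (β i) f = 0 := by
    intro i
    have := (Polynomial.mem_roots'.1 (hβmem i)).2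
    rwa [hfK, Polynomial.IsRoot, Polynomial.eval_map, ← Polynomial.aeval_def] at this
  -- roots are nonzero
  have hβne : ∀ i, β i ≠ 0 := by
    intro i h0
    have hc0 : f.coeff 0 = 0 := by
      have := hβrootf i
      rw [h0] at this
      rw [show (Polynomial.aeval (0:K)) f = algebraMap ℚ K (f.coeff 0) by
        rw [Polynomial.aeval_def, Polynomial.eval₂_at_zero]] at this
      exact (_root_.map_eq_zero (algebraMap ℚ K)).1 this
    have hXdvd : X ∣ f := Polynomial.X_dvd_iff.2 hc0
    obtain ⟨g, hg⟩ := hXdvd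
    rcases hirr.isUnit_or_isUnit hg with h | h
    · exact Polynomial.not_isUnit_X h
    · have hgne : g ≠ 0 := by
        rintro rfl
        rw [mul_zero] at hg
        exact hf0 hg
      have : f.natDegree = 1 := by
        rw [hg, Polynomial.natDegree_mul Polynomial.X_ne_zero hgne,
          Polynomial.natDegree_X, Polynomial.natDegree_eq_zero_of_isUnit h]
      omega
  -- sum of roots is zero
  have hβsum : ∑ i : Fin n, β i = 0 := by
    have h1 : fK.nextCoeff = -fK.roots.sum :=
      hsplK.nextCoeff_eq_neg_sum_roots_of_monic hfKmonic
    have h2 : fK.nextCoeff = 0 := by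
      rw [Polynomial.nextCoeff_of_natDegree_pos (by omega), hfKdeg, hfK,
        Polynomial.coeff_map, ha, map_zero]
    have h3 : fK.roots.sum = 0 := by rw [← neg_eq_zero, ← h1, h2]
    rw [hβroots] at h3
    rwa [Multiset.sum_coe, List.sum_ofFn] at h3
  -- Galois group element of order n
  have hdvd : n ∣ Fintype.card f.Gal := by
    have := Polynomial.Gal.prime_degree_dvd_card hirr (hdeg ▸ hn)
    rwa [hdeg, Nat.card_eq_fintype_card] at this
  obtain ⟨σ, hσ⟩ := exists_prime_orderOf_dvd_card n hdvd
  -- σ : f.Gal, i.e. K ≃ₐ[ℚ] K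
  have hσroot : ∀ i : Fin n, Polynomial.aeval (σ (β i)) f = 0 := by
    intro i
    have h1 : Polynomial.aeval (σ (β i)) f = σ (Polynomial.aeval (β i) f) :=
      Polynomial.aeval_algHom_apply σ.toAlgHom (β i) f
    rw [h1, hβrootf i, map_zero]
  have hσmem : ∀ i : Fin n, σ (β i) ∈ fK.roots := by
    intro i
    rw [Polynomial.mem_roots']
    refine ⟨fun h => ?_, ?_⟩
    · rw [hfK] at h
      exact hf0 ((Polynomial.map_eq_zero _).1 h)
    · rw [hfK, Polynomial.IsRoot, Polynomial.eval_map, ← Polynomial.aeval_def]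
      exact hσroot i
  choose π₀ hπ₀ using fun i => hβsurj _ (hσmem i)
  have hπ₀inj : Function.Injective π₀ := by
    intro i j h
    have : σ (β i) = σ (β j) := by rw [← hπ₀ i, ← hπ₀ j, h]
    exact hβinj (σ.injective this)
  let π : Equiv.Perm (Fin n) := Equiv.ofBijective π₀ (Finite.injective_iff_bijective.1 hπ₀inj)
  have hπ : ∀ i, β (π i) = σ (β i) := hπ₀
  -- powers
  have hpow : ∀ (k : ℕ) (i : Fin n), β ((π ^ k) i) = (σ ^ k) (β i) := by
    intro k
    induction k with
    | zero => intro i; rw [pow_zero, pow_zero]; rfl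
    | succ k ih =>
      intro i
      rw [pow_succ, pow_succ, Equiv.Perm.mul_apply]
      erw [AlgEquiv.mul_apply]
      rw [ih (π i), hπ i]
      rfl
  -- if a power of π is the identity, the corresponding power of σ is the identity
  have hfixσ : ∀ k : ℕ, π ^ k = 1 → σ ^ k = 1 := by
    intro k hk
    apply Polynomial.Gal.ext
    intro x hx
    have hxroot : x ∈ fK.roots := by
      rw [Polynomial.mem_roots']
      rw [Polynomial.mem_rootSet'] at hx
      refine ⟨fun h => hx.1 (by rwa [hfK] at h), ?_⟩
      rw [hfK, Polynomial.IsRoot, Polynomial.eval_map, ← Polynomial.aeval_def]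
      exact hx.2
    obtain ⟨i, rfl⟩ := hβsurj x hxroot
    have := hpow k i
    rw [hk] at this
    simp only [Equiv.Perm.one_apply] at this
    rw [← this]
    rfl
  have hπord : orderOf π = n := by
    have h1 : π ^ n = 1 := by
      have hσn : σ ^ n = 1 := by rw [← hσ]; exact pow_orderOf_eq_one σ
      ext i
      have h := hpow n i
      rw [hσn] at h
      have hb : β ((π ^ n) i) = β i := by rw [h]; rfl
      rw [hβinj hb]
      rfl
    have h2 : orderOf π ∣ n := orderOf_dvd_of_pow_eq_one h1
    have h3 : n ∣ orderOf π := by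
      have := hfixσ (orderOf π) (pow_orderOf_eq_one π)
      have := orderOf_dvd_of_pow_eq_one this
      rwa [hσ] at this
    exact Nat.dvd_antisymm h2 h3
  -- a point moved by π
  have hπne1 : π ≠ 1 := by
    intro h
    rw [h, orderOf_one] at hπord
    omega
  obtain ⟨i₀, hi₀⟩ : ∃ i₀, π i₀ ≠ i₀ := by
    by_contra h
    push_neg at h
    exact hπne1 (Equiv.ext h)
  -- powers of π do not fix i₀ except multiples of n
  have hfixi₀ : ∀ k : ℕ, (π ^ k) i₀ = i₀ → n ∣ k := by
    intro k hk
    by_contra h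
    have hcop : Nat.Coprime k n := (Nat.coprime_comm.1 ((hn.coprime_iff_not_dvd).2 h))
    obtain ⟨a, -, ha'⟩ := Nat.exists_mul_mod_eq_one_of_coprime hcop (by omega)
    have hpowfix : ∀ b : ℕ, ((π ^ k) ^ b) i₀ = i₀ := by
      intro b
      induction b with
      | zero => rfl
      | succ b ih => rw [pow_succ, Equiv.Perm.mul_apply, hk, ih]
    have h1 : π ^ (k * a) = π ^ 1 := by
      rw [pow_eq_pow_iff_modEq, hπord]
      unfold Nat.ModEq
      rw [ha', Nat.one_mod_eq_one.2 (by omega)]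
    have h2 : (π ^ (k * a)) i₀ = i₀ := by rw [pow_mul]; exact hpowfix a
    rw [h1, pow_one] at h2
    exact hi₀ h2
  -- the enumeration of the cycle
  have heinj : Function.Injective (fun m : ZMod n => (π ^ m.val) i₀) := by
    intro m m' h
    simp only at h
    have h1 : (π ^ (n - m'.val + m.val)) i₀ = i₀ := by
      have hπn1 : π ^ n = 1 := by
        have := pow_orderOf_eq_one π
        rwa [hπord] at this
      have e1 : (π ^ (n - m'.val + m.val)) i₀ = (π ^ (n - m'.val)) ((π ^ m.val) i₀) := by
        rw [pow_add, Equiv.Perm.mul_apply]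
      rw [e1, h, ← Equiv.Perm.mul_apply, ← pow_add,
        Nat.sub_add_cancel (le_of_lt (ZMod.val_lt m')), hπn1]
      rfl
    have h2 := hfixi₀ _ h1
    have hm := ZMod.val_lt m
    have hm' := ZMod.val_lt m'
    have : m.val = m'.val := by
      rcases h2 with ⟨c, hc⟩
      have hc2 : c < 2 := by
        by_contra hge
        push_neg at hge
        have : 2 * n ≤ n * c := by
          calc 2 * n = n * 2 := by ring
            _ ≤ n * c := Nat.mul_le_mul_left n hge
        omega
      interval_cases c <;> omega
    exact ZMod.val_injective n this
  let e : ZMod n ≃ Fin n := Equiv.ofBijective _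
    ((Fintype.bijective_iff_injective_and_card _).2 ⟨heinj, by simp [ZMod.card]⟩)
  have he : ∀ m : ZMod n, e m = (π ^ m.val) i₀ := fun m => rfl
  haveI : Fact (1 < n) := ⟨by omega⟩
  -- γ (m + 1) = σ (γ m)
  have hγsucc : ∀ m : ZMod n, β (e (m + 1)) = σ (β (e m)) := by
    intro m
    have hexp : (π ^ (m + 1).val) = π ^ (m.val + 1) := by
      rw [pow_eq_pow_iff_modEq, hπord, ZMod.val_add, ZMod.val_one]
      exact Nat.mod_modEq _ n
    rw [he, he, hexp, pow_succ', Equiv.Perm.mul_apply, hπ]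
  -- transfer the relation from ℂ to K, reindex by e, apply the key lemma
  intro c hc i j
  have hrelK : ∑ i : Fin n, c i • β i = 0 := by
    apply hψinj
    rw [map_zero, show ψ (∑ i : Fin n, c i • β i) = ψ.toLinearMap (∑ i : Fin n, c i • β i)
      from rfl, map_sum, ← hc]
    refine Finset.sum_congr rfl fun i _ => ?_
    rw [map_smul, show ψ.toLinearMap (β i) = ψ (β i) from rfl, hβψ]
  have hγne : ∀ m : ZMod n, β (e m) ≠ 0 := fun m => hβne _
  have htraceγ : ∑ m : ZMod n, β (e m) = 0 := by
    rw [Equiv.sum_comp e β]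
    exact hβsum
  have hshiftγ : ∀ d : ZMod n → ℚ, ∑ m : ZMod n, d m • β (e m) = 0 →
      ∑ m : ZMod n, d m • β (e (m + 1)) = 0 := by
    intro d hd
    have hlin : ∑ m : ZMod n, d m • β (e (m + 1))
        = σ.toLinearMap (∑ m : ZMod n, d m • β (e m)) := by
      rw [map_sum]
      refine Finset.sum_congr rfl fun m _ => ?_
      rw [hγsucc m, map_smul]
      rfl
    rw [hlin, hd, map_zero]
  have hrel2 : ∑ m : ZMod n, c (e m) • β (e m) = 0 := by
    rw [Equiv.sum_comp e (fun i => c i • β i)]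
    exact hrelK
  have hconst := key_lemma n hn (fun m => β (e m)) hγne htraceγ hshiftγ
    (fun m => c (e m)) hrel2
  have h1 := hconst (e.symm i) (e.symm j)
  simpa using h1



/-- n prime, f monic irreducible of degree n with roots α₁,...,αₙ and
a_{n-1} = 0. Then α₁,...,α_{n-1} are linearly independent over ℚ,
αₙ = -(α₁ + ... + α_{n-1}), and the ℚ-span of the roots has dimension n-1. -/
theorem stmt_1 (n : ℕ) (hn : n.Prime) (f : Polynomial ℚ) (hirr : Irreducible f)
    (hmonic : f.Monic) (hdeg : f.natDegree = n) (α : Fin n → ℂ)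
    (hroots : (f.map (algebraMap ℚ ℂ)).roots = (List.ofFn α : Multiset ℂ))
    (ha : f.coeff (n - 1) = 0) :
    LinearIndependent ℚ (fun i : Fin (n - 1) => α (Fin.castLE (Nat.sub_le n 1) i)) ∧
    α ⟨n - 1, by have := hn.one_lt; omega⟩ =
      -∑ i : Fin (n - 1), α (Fin.castLE (Nat.sub_le n 1) i) ∧
    Module.finrank ℚ (Submodule.span ℚ (Set.range α)) = n - 1 := by
  classical
  have hn2 : 2 ≤ n := hn.two_le
  have hconst := roots_constant n hn f hirr hmonic hdeg α hroots ha
  -- sum of all roots is zero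
  have hsplC : (f.map (algebraMap ℚ ℂ)).Splits := IsAlgClosed.splits _
  set fC := f.map (algebraMap ℚ ℂ) with hfC
  have hsplC' : fC.Splits := hsplC
  have hfCmonic : fC.Monic := hmonic.map _
  have hfCdeg : fC.natDegree = n := by rw [hfC, hmonic.natDegree_map, hdeg]
  have hsum : ∑ i : Fin n, α i = 0 := by
    have h1 : fC.nextCoeff = -fC.roots.sum :=
      hsplC'.nextCoeff_eq_neg_sum_roots_of_monic hfCmonic
    have h2 : fC.nextCoeff = 0 := by
      rw [Polynomial.nextCoeff_of_natDegree_pos (by omega), hfCdeg, hfC,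
        Polynomial.coeff_map, ha, map_zero]
    have h3 : fC.roots.sum = 0 := by rw [← neg_eq_zero, ← h1, h2]
    rw [hroots] at h3
    rwa [Multiset.sum_coe, List.sum_ofFn] at h3
  -- index bookkeeping
  set lastIdx : Fin n := ⟨n - 1, by omega⟩ with hlastIdx
  set ι : Fin (n - 1) ↪ Fin n := Fin.castLEEmb (Nat.sub_le n 1) with hι
  have hnotmem : lastIdx ∉ Finset.univ.map ι := by
    rw [Finset.mem_map]
    rintro ⟨i, -, hi⟩
    have : (i : ℕ) = n - 1 := by
      have := congrArg Fin.val hi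
      simpa [hι, hlastIdx] using this
    have := i.isLt
    omega
  have huniv : (Finset.univ : Finset (Fin n)) = insert lastIdx (Finset.univ.map ι) := by
    symm
    apply Finset.eq_univ_of_forall
    intro j
    rcases Nat.lt_or_ge (j : ℕ) (n - 1) with hj | hj
    · refine Finset.mem_insert_of_mem (Finset.mem_map.2 ⟨⟨(j : ℕ), hj⟩, Finset.mem_univ _, ?_⟩)
      apply Fin.ext
      simp [hι]
    · have hje : (j : ℕ) = n - 1 := by have := j.isLt; omega
      exact Finset.mem_insert.2 (Or.inl (Fin.ext (by simp [hlastIdx, hje])))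
  have hι_apply : ∀ i : Fin (n - 1), ι i = Fin.castLE (Nat.sub_le n 1) i := fun i => rfl
  -- part 2
  have hlast : α lastIdx = -∑ i : Fin (n - 1), α (Fin.castLE (Nat.sub_le n 1) i) := by
    have h0 : ∑ j : Fin n, α j = α lastIdx + ∑ i : Fin (n - 1), α (Fin.castLE (Nat.sub_le n 1) i) := by
      rw [huniv, Finset.sum_insert hnotmem, Finset.sum_map]
      simp only [hι, Fin.castLEEmb_apply]
    rw [h0] at hsum
    linear_combination hsum
  -- part 1
  have hli : LinearIndependent ℚ (fun i : Fin (n - 1) => α (Fin.castLE (Nat.sub_le n 1) i)) := by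
    rw [Fintype.linearIndependent_iff]
    intro g hg
    set c : Fin n → ℚ := fun j => if h : (j : ℕ) < n - 1 then g ⟨(j : ℕ), h⟩ else 0 with hc
    have hcι : ∀ i : Fin (n - 1), c (ι i) = g i := by
      intro i
      have hlt : ((ι i : Fin n) : ℕ) < n - 1 := by simpa [hι] using i.isLt
      rw [hc]
      simp only [dif_pos hlt]
      congr 1
    have hclast : c lastIdx = 0 := by
      rw [hc]
      simp [hlastIdx]
    have hrel : ∑ j : Fin n, c j • α j = 0 := by
      rw [huniv, Finset.sum_insert hnotmem, Finset.sum_map, hclast, zero_smul, zero_add]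
      rw [← hg]
      refine Finset.sum_congr rfl fun i _ => ?_
      rw [hcι i]
      simp only [hι, Fin.castLEEmb_apply]
    intro i
    rw [← hcι i, hconst c hrel (ι i) lastIdx, hclast]
  refine ⟨hli, hlast, ?_⟩
  -- part 3
  have hspan : Submodule.span ℚ (Set.range α)
      = Submodule.span ℚ (Set.range (fun i : Fin (n - 1) => α (Fin.castLE (Nat.sub_le n 1) i))) := by
    apply le_antisymm
    · rw [Submodule.span_le]
      rintro _ ⟨j, rfl⟩
      rcases Nat.lt_or_ge (j : ℕ) (n - 1) with hj | hj
      · apply Submodule.subset_span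
        exact ⟨⟨(j : ℕ), hj⟩, by apply congrArg; apply Fin.ext; simp⟩
      · have hj' : j = lastIdx := Fin.ext (by have := j.isLt; simp [hlastIdx]; omega)
        rw [hj', hlast]
        exact neg_mem (Submodule.sum_mem _ fun i _ => Submodule.subset_span ⟨i, rfl⟩)
    · apply Submodule.span_mono
      rintro _ ⟨i, rfl⟩
      exact ⟨Fin.castLE (Nat.sub_le n 1) i, rfl⟩
  rw [hspan, finrank_span_eq_card hli, Fintype.card_fin]
end

section
/- Let f(x) = a₂x² + a₁x + a₀ ∈ ℤ[x] be an irreducible quadratic with real roots α₁ > α₂ and discriminant D = a₁² - 4a₂a₀ > 0. The lattice L_f = span_ℤ{(α₁,α₂), (α₂,α₁)} ⊂ ℝ² is well-rounded (i.e., contains two linearly independent vectors of minimal norm) if and only if a₁² ≥ 2·max{3a₀a₂, -a₀a₂}. -/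
lemma wr_aux_sq (m n : ℤ) (h : ¬(m = 0 ∧ n = 0)) :
    1 ≤ m^2+n^2-m*n ∧ 1 ≤ m^2+n^2+m*n := by
  have h1 : 1 ≤ m^2+n^2 := by
    rcases not_and_or.mp h with h' | h'
    · nlinarith [sq_nonneg n, Int.one_le_abs (by omega : m ≠ 0), sq_abs m]
    · nlinarith [sq_nonneg m, Int.one_le_abs (by omega : n ≠ 0), sq_abs n]
  constructor
  · have h2 : 1 ≤ 2*(m^2+n^2-m*n) := by nlinarith [sq_nonneg (m-n)]
    set k := m^2+n^2-m*n with hk; omega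
  · have h2 : 1 ≤ 2*(m^2+n^2+m*n) := by nlinarith [sq_nonneg (m+n)]
    set k := m^2+n^2+m*n with hk; omega

lemma wr_min1 (N P : ℝ) (m n : ℤ) (h : ¬(m=0∧n=0)) (hN : 0 < N)
    (h1 : 4*P ≤ N) (h2 : -N ≤ 4*P) :
    N ≤ ((m:ℝ)^2+(n:ℝ)^2)*N + 4*((m:ℝ)*(n:ℝ))*P := by
  obtain ⟨k1, k2⟩ := wr_aux_sq m n h
  have k1' : (1:ℝ) ≤ (m:ℝ)^2+(n:ℝ)^2-(m:ℝ)*n := by exact_mod_cast k1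
  have k2' : (1:ℝ) ≤ (m:ℝ)^2+(n:ℝ)^2+(m:ℝ)*n := by exact_mod_cast k2
  rcases le_or_gt 0 ((m:ℝ)*n) with hmn | hmn
  · nlinarith [mul_le_mul_of_nonneg_left h2 hmn]
  · nlinarith [mul_le_mul_of_nonpos_left h1 hmn.le]

lemma wr_min2 (N P : ℝ) (m n : ℤ) (hne : ¬(m=1∧n=-1)) (hne' : ¬(m=-1∧n=1))
    (h0 : ¬(m=0∧n=0)) (hN : 0 < N) (hlt : N < 4*P) (hs : 4*P < 2*N) :
    2*N - 4*P < ((m:ℝ)^2+(n:ℝ)^2)*N + 4*((m:ℝ)*(n:ℝ))*P := by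
  obtain ⟨k1, k2⟩ := wr_aux_sq m n h0
  have hsum : (1:ℝ) ≤ (m:ℝ)^2+(n:ℝ)^2 := by
    have : (2:ℤ) ≤ 2*(m^2+n^2) := by linarith
    have : (1:ℤ) ≤ m^2+n^2 := by omega
    exact_mod_cast this
  rcases lt_trichotomy (m*n) (-1) with hmn | hmn | hmn
  · have hmn' : ((m:ℝ)*n + 1) ≤ -1 := by
      have h' : (((m*n+1 : ℤ)):ℝ) ≤ ((-1 : ℤ) : ℝ) := by exact_mod_cast (by omega : m*n+1 ≤ -1)
      push_cast at h'; linarith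
    have key : ((m:ℝ)*n+1)*(2*N) < ((m:ℝ)*n+1)*(4*P) :=
      mul_lt_mul_of_neg_left hs (by linarith)
    nlinarith [sq_nonneg ((m:ℝ)+n), hN, key, mul_nonneg (sq_nonneg ((m:ℝ)+n)) hN.le]
  · exfalso
    have hm : m = 1 ∨ m = -1 := Int.isUnit_iff.mp (IsUnit.of_mul_eq_one (a := m) (-n)
      (by rw [mul_neg, hmn]; norm_num))
    rcases hm with rfl | rfl
    · exact hne ⟨rfl, by omega⟩
    · exact hne' ⟨rfl, by omega⟩
  · have hmn0 : 0 ≤ m*n := by omega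
    have hmn0' : (0:ℝ) ≤ (m:ℝ)*n := by exact_mod_cast hmn0
    have hP : 0 < P := by linarith
    nlinarith [mul_nonneg hmn0' hP.le,
      mul_nonneg (by linarith : (0:ℝ) ≤ (m:ℝ)^2+(n:ℝ)^2-1) hN.le]

set_option maxHeartbeats 2000000 in
/-- For an irreducible quadratic f = a₂x² + a₁x + a₀ ∈ ℤ[x] with D > 0 and
real roots α₁ > α₂, the lattice L_f = span_ℤ{(α₁,α₂),(α₂,α₁)} ⊂ ℝ² is well-rounded
(contains two linearly independent minimal vectors) iff a₁² ≥ 2·max{3a₀a₂, -a₀a₂}. -/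
theorem stmt_5 (a₂ a₁ a₀ : ℤ) (ha₂ : a₂ ≠ 0)
    (hirr : Irreducible (Polynomial.C (a₂ : ℚ) * Polynomial.X ^ 2 +
      Polynomial.C (a₁ : ℚ) * Polynomial.X + Polynomial.C (a₀ : ℚ)))
    (D : ℤ) (hD : D = a₁ ^ 2 - 4 * a₂ * a₀) (hDpos : 0 < D)
    (α₁ α₂ : ℝ) (hα₁ : α₁ = (-a₁ + Real.sqrt D) / (2 * a₂))
    (hα₂ : α₂ = (-a₁ - Real.sqrt D) / (2 * a₂)) (hord : α₂ < α₁)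
    (v₁ v₂ : EuclideanSpace ℝ (Fin 2))
    (hv₁ : v₁ = (WithLp.equiv 2 (Fin 2 → ℝ)).symm ![α₁, α₂])
    (hv₂ : v₂ = (WithLp.equiv 2 (Fin 2 → ℝ)).symm ![α₂, α₁])
    (L : Submodule ℤ (EuclideanSpace ℝ (Fin 2))) (hL : L = Submodule.span ℤ {v₁, v₂}) :
    (∃ u w : EuclideanSpace ℝ (Fin 2), u ∈ L ∧ w ∈ L ∧ LinearIndependent ℝ ![u, w] ∧
      (∀ z ∈ L, z ≠ 0 → ‖u‖ ≤ ‖z‖) ∧ (∀ z ∈ L, z ≠ 0 → ‖w‖ ≤ ‖z‖)) ↔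
    a₁ ^ 2 ≥ 2 * max (3 * a₀ * a₂) (-(a₀ * a₂)) := by
  have ha₂R : (a₂:ℝ) ≠ 0 := Int.cast_ne_zero.mpr ha₂
  have hDR : (0:ℝ) < (D:ℝ) := by exact_mod_cast hDpos
  have hsq : Real.sqrt D ^ 2 = (D:ℝ) := Real.sq_sqrt hDR.le
  have hDcast : (D:ℝ) = (a₁:ℝ)^2 - 4*a₂*a₀ := by rw [hD]; push_cast; ring
  have hsum' : (α₁+α₂) * a₂ = -(a₁:ℝ) := by rw [hα₁, hα₂]; field_simp; ring
  have hprod'' : (α₁*α₂) * a₂ = (a₀:ℝ) := by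
    rw [hα₁, hα₂]; field_simp
    linear_combination (-1:ℝ) * hsq + (-1:ℝ) * hDcast
  have ha₂sq : (0:ℝ) < (a₂:ℝ)^2 := by positivity
  have hNa : (α₁^2+α₂^2) * (a₂:ℝ)^2 = (a₁:ℝ)^2 - 2*((a₀:ℝ)*a₂) := by
    linear_combination ((α₁+α₂)*(a₂:ℝ) - a₁) * hsum' - 2*(a₂:ℝ) * hprod''
  have hPa : (α₁*α₂) * (a₂:ℝ)^2 = (a₀:ℝ)*a₂ := by
    linear_combination (a₂:ℝ) * hprod''
  have e1 : 4*(α₁*α₂) ≤ α₁^2+α₂^2 ↔ 6*a₀*a₂ ≤ a₁^2 := by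
    constructor
    · intro h
      have h' : 4*(α₁*α₂)*(a₂:ℝ)^2 ≤ (α₁^2+α₂^2)*(a₂:ℝ)^2 :=
        mul_le_mul_of_nonneg_right h ha₂sq.le
      have h'' : ((6*a₀*a₂ : ℤ):ℝ) ≤ ((a₁^2 : ℤ):ℝ) := by push_cast; nlinarith [hPa, hNa]
      exact_mod_cast h''
    · intro h
      have h' : ((6*a₀*a₂ : ℤ):ℝ) ≤ ((a₁^2 : ℤ):ℝ) := by exact_mod_cast h
      push_cast at h'
      nlinarith [ha₂sq, hPa, hNa]
  have e2 : -(α₁^2+α₂^2) ≤ 4*(α₁*α₂) ↔ -(2*a₀*a₂) ≤ a₁^2 := by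
    constructor
    · intro h
      have h' : -(α₁^2+α₂^2)*(a₂:ℝ)^2 ≤ 4*(α₁*α₂)*(a₂:ℝ)^2 :=
        mul_le_mul_of_nonneg_right h ha₂sq.le
      have h'' : ((-(2*a₀*a₂) : ℤ):ℝ) ≤ ((a₁^2 : ℤ):ℝ) := by push_cast; nlinarith [hPa, hNa]
      exact_mod_cast h''
    · intro h
      have h' : ((-(2*a₀*a₂) : ℤ):ℝ) ≤ ((a₁^2 : ℤ):ℝ) := by exact_mod_cast h
      push_cast at h'
      nlinarith [ha₂sq, hPa, hNa]
  have hR : (a₁ ^ 2 ≥ 2 * max (3 * a₀ * a₂) (-(a₀ * a₂))) ↔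
      (6*a₀*a₂ ≤ a₁^2 ∧ -(2*a₀*a₂) ≤ a₁^2) := by
    rw [ge_iff_le]
    constructor
    · intro h
      constructor
      · linarith [le_max_left (3*a₀*a₂) (-(a₀*a₂))]
      · linarith [le_max_right (3*a₀*a₂) (-(a₀*a₂))]
    · rintro ⟨h1, h2⟩
      rcases max_cases (3*a₀*a₂) (-(a₀*a₂)) with ⟨hm, _⟩ | ⟨hm, _⟩ <;> rw [hm] <;> linarith
  have hordd : 0 < α₁ - α₂ := sub_pos.mpr hord
  have hNpos : 0 < α₁^2+α₂^2 := by nlinarith [mul_pos hordd hordd, sq_nonneg (α₁+α₂)]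
  have hstrict : 4*(α₁*α₂) < 2*(α₁^2+α₂^2) := by nlinarith [mul_pos hordd hordd]
  have hnormsq : ∀ x : EuclideanSpace ℝ (Fin 2), ‖x‖^2 = x 0^2 + x 1^2 := by
    intro x
    rw [EuclideanSpace.norm_eq, Real.sq_sqrt (by positivity)]
    simp [Fin.sum_univ_two, sq_abs]
  have hcomp : ∀ m n : ℤ, ‖(m • v₁ + n • v₂ : EuclideanSpace ℝ (Fin 2))‖^2 =
      ((m:ℝ)^2+(n:ℝ)^2)*(α₁^2+α₂^2) + 4*((m:ℝ)*(n:ℝ))*(α₁*α₂) := by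
    intro m n
    rw [hnormsq]
    simp [hv₁, hv₂]
    ring
  have hv₁L : v₁ ∈ L := by rw [hL]; exact Submodule.subset_span (by simp)
  have hv₂L : v₂ ∈ L := by rw [hL]; exact Submodule.subset_span (by simp)
  constructor
  · rintro ⟨u, w, huL, hwL, hli, humin, hwmin⟩
    by_contra hcon
    have hfail : a₁^2 < 6*a₀*a₂ ∨ a₁^2 < -(2*a₀*a₂) := by
      have := fun h => hcon (hR.mpr h)
      rcases not_and_or.mp this with h | h
      · exact Or.inl (lt_of_not_ge h)
      · exact Or.inr (lt_of_not_ge h)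
    have hu0 : u ≠ 0 := by simpa using hli.ne_zero 0
    have hw0 : w ≠ 0 := by simpa using hli.ne_zero 1
    obtain ⟨m, n, hmn⟩ := Submodule.mem_span_pair.mp (hL ▸ huL)
    obtain ⟨p, q, hpq⟩ := Submodule.mem_span_pair.mp (hL ▸ hwL)
    have hmn0 : ¬(m = 0 ∧ n = 0) := by
      rintro ⟨rfl, rfl⟩; apply hu0; rw [← hmn]; simp
    have hpq0 : ¬(p = 0 ∧ q = 0) := by
      rintro ⟨rfl, rfl⟩; apply hw0; rw [← hpq]; simp
    by_cases ha₁ : a₁ = 0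
    · -- degenerate: v₂ = -v₁, lattice has rank 1
      have hα : α₂ = -α₁ := by rw [hα₁, hα₂, ha₁]; push_cast; ring
      have hvv : v₂ = -v₁ := by
        rw [hv₁, hv₂, hα]
        ext i; fin_cases i <;> simp
      have hu : u = (((m:ℝ) - n)) • v₁ := by
        rw [← hmn, hvv]
        rw [smul_neg, ← sub_eq_add_neg, ← Int.cast_smul_eq_zsmul ℝ m v₁,
          ← Int.cast_smul_eq_zsmul ℝ n v₁, ← sub_smul]
      have hw : w = (((p:ℝ) - q)) • v₁ := by
        rw [← hpq, hvv]
        rw [smul_neg, ← sub_eq_add_neg, ← Int.cast_smul_eq_zsmul ℝ p v₁,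
          ← Int.cast_smul_eq_zsmul ℝ q v₁, ← sub_smul]
      have hkey := (LinearIndependent.pair_iff.mp hli ((p:ℝ) - q) (-((m:ℝ) - n))
        (by rw [hu, hw, smul_smul, smul_smul, ← add_smul]
            have : ((p:ℝ) - q) * ((m:ℝ) - n) + (-((m:ℝ) - n)) * ((p:ℝ) - q) = 0 := by ring
            rw [this, zero_smul])).2
      have hz : ((m:ℝ) - n) = 0 := by
        have := neg_eq_zero.mp hkey
        linarith
      apply hu0
      rw [hu, hz, zero_smul]
    · -- a₁ ≠ 0
      have ha₁R : (a₁:ℝ) ≠ 0 := Int.cast_ne_zero.mpr ha₁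
      have hsumne : α₁ + α₂ ≠ 0 := by
        intro h
        apply ha₁R
        have := hsum'
        rw [h, zero_mul] at this
        linarith
      have hsumsq : 0 < (α₁+α₂)^2 :=
        lt_of_le_of_ne (sq_nonneg _) (Ne.symm (pow_ne_zero 2 hsumne))
      have hstrict2 : -(4*(α₁*α₂)) < 2*(α₁^2+α₂^2) := by nlinarith [hsumsq]
      rcases hfail with hf | hf
      · -- N < 4P ; minimal direction v₁ - v₂
        have hNP : α₁^2+α₂^2 < 4*(α₁*α₂) := by
          by_contra h
          exact absurd (e1.mp (not_lt.mp h)) (by omega)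
        have hdL : v₁ - v₂ ∈ L := sub_mem hv₁L hv₂L
        have hd : ((1:ℤ) • v₁ + (-1:ℤ) • v₂ : EuclideanSpace ℝ (Fin 2)) = v₁ - v₂ := by
          simp [sub_eq_add_neg]
        have hdnorm : ‖v₁ - v₂‖^2 = 2*(α₁^2+α₂^2) - 4*(α₁*α₂) := by
          rw [← hd, hcomp]; push_cast; ring
        have hd0 : v₁ - v₂ ≠ 0 := by
          intro h
          rw [h, norm_zero] at hdnorm
          nlinarith [hstrict]
        have keyu : (m = 1 ∧ n = -1) ∨ (m = -1 ∧ n = 1) := by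
          by_contra hc
          obtain ⟨hc1, hc2⟩ := not_or.mp hc
          have h2 := wr_min2 (α₁^2+α₂^2) (α₁*α₂) m n hc1 hc2 hmn0 hNpos hNP hstrict
          have hle : ‖u‖^2 ≤ ‖v₁ - v₂‖^2 :=
            pow_le_pow_left₀ (norm_nonneg u) (humin _ hdL hd0) 2
          rw [hdnorm, ← hmn, hcomp] at hle
          linarith
        have keyw : (p = 1 ∧ q = -1) ∨ (p = -1 ∧ q = 1) := by
          by_contra hc
          obtain ⟨hc1, hc2⟩ := not_or.mp hc
          have h2 := wr_min2 (α₁^2+α₂^2) (α₁*α₂) p q hc1 hc2 hpq0 hNpos hNP hstrict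
          have hle : ‖w‖^2 ≤ ‖v₁ - v₂‖^2 :=
            pow_le_pow_left₀ (norm_nonneg w) (hwmin _ hdL hd0) 2
          rw [hdnorm, ← hpq, hcomp] at hle
          linarith
        have hud : u = v₁ - v₂ ∨ u = -(v₁ - v₂) := by
          rcases keyu with ⟨rfl, rfl⟩ | ⟨rfl, rfl⟩
          · left; rw [← hmn]; simp [sub_eq_add_neg]
          · right; rw [← hmn]; simp [sub_eq_add_neg]; abel
        have hwd : w = v₁ - v₂ ∨ w = -(v₁ - v₂) := by
          rcases keyw with ⟨rfl, rfl⟩ | ⟨rfl, rfl⟩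
          · left; rw [← hpq]; simp [sub_eq_add_neg]
          · right; rw [← hpq]; simp [sub_eq_add_neg]; abel
        rcases hud with hu' | hu' <;> rcases hwd with hw' | hw'
        · exact one_ne_zero ((LinearIndependent.pair_iff.mp hli 1 (-1)
            (by rw [hu', hw']; module)).1)
        · exact one_ne_zero ((LinearIndependent.pair_iff.mp hli 1 1
            (by rw [hu', hw']; module)).1)
        · exact one_ne_zero ((LinearIndependent.pair_iff.mp hli 1 1
            (by rw [hu', hw']; module)).1)
        · exact one_ne_zero ((LinearIndependent.pair_iff.mp hli 1 (-1)
            (by rw [hu', hw']; module)).1)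
      · -- N < -4P ; minimal direction v₁ + v₂
        have hNP : α₁^2+α₂^2 < 4*(-(α₁*α₂)) := by
          have : ¬ (-(α₁^2+α₂^2) ≤ 4*(α₁*α₂)) := by
            intro h
            exact absurd (e2.mp h) (by omega)
          push_neg at this
          linarith
        have hstrict' : 4*(-(α₁*α₂)) < 2*(α₁^2+α₂^2) := by linarith
        have hdL : v₁ + v₂ ∈ L := add_mem hv₁L hv₂L
        have hd : ((1:ℤ) • v₁ + (1:ℤ) • v₂ : EuclideanSpace ℝ (Fin 2)) = v₁ + v₂ := by
          simp
        have hdnorm : ‖v₁ + v₂‖^2 = 2*(α₁^2+α₂^2) + 4*(α₁*α₂) := by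
          rw [← hd, hcomp]; push_cast; ring
        have hd0 : v₁ + v₂ ≠ 0 := by
          intro h
          rw [h, norm_zero] at hdnorm
          nlinarith [hstrict2]
        have keyu : (m = 1 ∧ n = 1) ∨ (m = -1 ∧ n = -1) := by
          by_contra hc
          obtain ⟨hc1, hc2⟩ := not_or.mp hc
          have h2 := wr_min2 (α₁^2+α₂^2) (-(α₁*α₂)) m (-n)
            (by omega) (by omega) (by omega) hNpos hNP hstrict'
          have hle : ‖u‖^2 ≤ ‖v₁ + v₂‖^2 :=
            pow_le_pow_left₀ (norm_nonneg u) (humin _ hdL hd0) 2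
          rw [hdnorm, ← hmn, hcomp] at hle
          push_cast at h2
          nlinarith [h2, hle]
        have keyw : (p = 1 ∧ q = 1) ∨ (p = -1 ∧ q = -1) := by
          by_contra hc
          obtain ⟨hc1, hc2⟩ := not_or.mp hc
          have h2 := wr_min2 (α₁^2+α₂^2) (-(α₁*α₂)) p (-q)
            (by omega) (by omega) (by omega) hNpos hNP hstrict'
          have hle : ‖w‖^2 ≤ ‖v₁ + v₂‖^2 :=
            pow_le_pow_left₀ (norm_nonneg w) (hwmin _ hdL hd0) 2
          rw [hdnorm, ← hpq, hcomp] at hle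
          push_cast at h2
          nlinarith [h2, hle]
        have hud : u = v₁ + v₂ ∨ u = -(v₁ + v₂) := by
          rcases keyu with ⟨rfl, rfl⟩ | ⟨rfl, rfl⟩
          · left; rw [← hmn]; simp
          · right; rw [← hmn]; simp; abel
        have hwd : w = v₁ + v₂ ∨ w = -(v₁ + v₂) := by
          rcases keyw with ⟨rfl, rfl⟩ | ⟨rfl, rfl⟩
          · left; rw [← hpq]; simp
          · right; rw [← hpq]; simp; abel
        rcases hud with hu' | hu' <;> rcases hwd with hw' | hw'
        · exact one_ne_zero ((LinearIndependent.pair_iff.mp hli 1 (-1)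
            (by rw [hu', hw']; module)).1)
        · exact one_ne_zero ((LinearIndependent.pair_iff.mp hli 1 1
            (by rw [hu', hw']; module)).1)
        · exact one_ne_zero ((LinearIndependent.pair_iff.mp hli 1 1
            (by rw [hu', hw']; module)).1)
        · exact one_ne_zero ((LinearIndependent.pair_iff.mp hli 1 (-1)
            (by rw [hu', hw']; module)).1)
  · intro hRHS
    obtain ⟨h6, h2i⟩ := hR.mp hRHS
    have h1R : 4*(α₁*α₂) ≤ α₁^2+α₂^2 := e1.mpr h6
    have h2R : -(α₁^2+α₂^2) ≤ 4*(α₁*α₂) := e2.mpr h2i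
    have ha₁ : a₁ ≠ 0 := by
      rintro rfl
      have hD' : (0:ℤ) < 0^2 - 4*a₂*a₀ := hD ▸ hDpos
      nlinarith [h2i, hD']
    have ha₁R : (a₁:ℝ) ≠ 0 := Int.cast_ne_zero.mpr ha₁
    have hsumne : α₁ + α₂ ≠ 0 := by
      intro h
      apply ha₁R
      have := hsum'
      rw [h, zero_mul] at this
      linarith
    refine ⟨v₁, v₂, hv₁L, hv₂L, ?_, ?_, ?_⟩
    · rw [LinearIndependent.pair_iff]
      intro s t hst
      have h0 : s*α₁ + t*α₂ = 0 := by
        have := congrArg (fun x : EuclideanSpace ℝ (Fin 2) => x 0) hst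
        simpa [hv₁, hv₂] using this
      have h1 : s*α₂ + t*α₁ = 0 := by
        have := congrArg (fun x : EuclideanSpace ℝ (Fin 2) => x 1) hst
        simpa [hv₁, hv₂] using this
      have hst1 : s + t = 0 := by
        have hm : (s+t)*(α₁+α₂) = 0 := by linear_combination h0 + h1
        rcases mul_eq_zero.mp hm with h | h
        · exact h
        · exact absurd h hsumne
      have hst2 : s = t := by
        have hm : (s-t)*(α₁-α₂) = 0 := by linear_combination h0 - h1
        rcases mul_eq_zero.mp hm with h | h
        · linarith
        · linarith
      constructor <;> linarith
    · intro z hz hz0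
      obtain ⟨m, n, hmn⟩ := Submodule.mem_span_pair.mp (hL ▸ hz)
      have hmn0 : ¬(m = 0 ∧ n = 0) := by
        rintro ⟨rfl, rfl⟩; apply hz0; rw [← hmn]; simp
      have hmin := wr_min1 (α₁^2+α₂^2) (α₁*α₂) m n hmn0 hNpos h1R h2R
      have hnv : ‖v₁‖^2 = α₁^2+α₂^2 := by rw [hnormsq]; simp [hv₁]
      apply le_of_pow_le_pow_left₀ (n := 2) two_ne_zero (norm_nonneg z)
      rw [hnv, ← hmn, hcomp]
      exact hmin
    · intro z hz hz0
      obtain ⟨m, n, hmn⟩ := Submodule.mem_span_pair.mp (hL ▸ hz)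
      have hmn0 : ¬(m = 0 ∧ n = 0) := by
        rintro ⟨rfl, rfl⟩; apply hz0; rw [← hmn]; simp
      have hmin := wr_min1 (α₁^2+α₂^2) (α₁*α₂) m n hmn0 hNpos h1R h2R
      have hnv : ‖v₂‖^2 = α₁^2+α₂^2 := by rw [hnormsq]; simp [hv₂]; ring
      apply le_of_pow_le_pow_left₀ (n := 2) two_ne_zero (norm_nonneg z)
      rw [hnv, ← hmn, hcomp]
      exact hmin
end

section
/- Let α₁, α₂, α₃ be real numbers with A = α₁²+α₂²+α₃² > 0 and B = α₁α₂+α₁α₃+α₂α₃ satisfying |B| < A/3. Then for all integers c₁, c₂, c₃ with (c₁,c₂,c₃) not equal to any of (0,0,0), ±(1,0,0), ±(0,1,0), ±(0,0,1), the quantity (c₁²+c₂²+c₃²)A + 2(c₁c₂+c₂c₃+c₁c₃)B is strictly greater than A. -/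
set_option maxHeartbeats 1000000


/-- If A = α₁²+α₂²+α₃² > 0 and |B| < A/3 where B = α₁α₂+α₁α₃+α₂α₃, then
for all integer triples (c₁,c₂,c₃) other than (0,0,0) and ±standard basis vectors,
(c₁²+c₂²+c₃²)A + 2(c₁c₂+c₂c₃+c₁c₃)B > A. -/
theorem stmt_10 (α₁ α₂ α₃ : ℝ) (A B : ℝ)
    (hA : A = α₁ ^ 2 + α₂ ^ 2 + α₃ ^ 2) (hApos : 0 < A)
    (hB : B = α₁ * α₂ + α₁ * α₃ + α₂ * α₃) (hBlt : |B| < A / 3)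
    (c₁ c₂ c₃ : ℤ)
    (h : ∀ ε : ℤ, ε = 1 ∨ ε = -1 →
      (c₁, c₂, c₃) ≠ (0, 0, 0) ∧ (c₁, c₂, c₃) ≠ (ε, 0, 0) ∧
      (c₁, c₂, c₃) ≠ (0, ε, 0) ∧ (c₁, c₂, c₃) ≠ (0, 0, ε)) :
    A < ((c₁ : ℝ) ^ 2 + c₂ ^ 2 + c₃ ^ 2) * A +
      2 * ((c₁ : ℝ) * c₂ + c₂ * c₃ + c₁ * c₃) * B := by
  obtain ⟨h0, h1, h2, h3⟩ := h 1 (Or.inl rfl)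
  obtain ⟨-, h1', h2', h3'⟩ := h (-1) (Or.inr rfl)
  simp only [ne_eq, Prod.mk.injEq, not_and] at h0 h1 h2 h3 h1' h2' h3'
  have h00 : ¬(c₁ = 0 ∧ c₂ = 0 ∧ c₃ = 0) := by tauto
  -- Q ≥ 2
  have hQ : 2 ≤ c₁^2 + c₂^2 + c₃^2 := by
    by_contra hq
    push_neg at hq
    have b1 : c₁ ≤ 1 := by nlinarith [sq_nonneg c₂, sq_nonneg c₃]
    have b1' : -1 ≤ c₁ := by nlinarith [sq_nonneg c₂, sq_nonneg c₃]
    have b2 : c₂ ≤ 1 := by nlinarith [sq_nonneg c₁, sq_nonneg c₃]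
    have b2' : -1 ≤ c₂ := by nlinarith [sq_nonneg c₁, sq_nonneg c₃]
    have b3 : c₃ ≤ 1 := by nlinarith [sq_nonneg c₁, sq_nonneg c₂]
    have b3' : -1 ≤ c₃ := by nlinarith [sq_nonneg c₁, sq_nonneg c₂]
    interval_cases c₁ <;> interval_cases c₂ <;> interval_cases c₃ <;> omega
  have key1 : 3 ≤ 3*(c₁^2+c₂^2+c₃^2) - 2*(c₁*c₂+c₂*c₃+c₁*c₃) := by
    by_cases hc : c₁ = c₂ ∧ c₂ = c₃
    · obtain ⟨e1, e2⟩ := hc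
      subst e1 e2
      have hne : c₁ ≠ 0 := by tauto
      have := Int.one_le_abs hne
      nlinarith [sq_abs c₁]
    · rcases not_and_or.mp hc with hc | hc
      · have : 1 ≤ (c₁ - c₂)^2 := by
          have : c₁ - c₂ ≠ 0 := sub_ne_zero.mpr hc
          have := Int.one_le_abs this
          nlinarith [sq_abs (c₁ - c₂)]
        nlinarith [sq_nonneg (c₂ - c₃), sq_nonneg (c₁ - c₃)]
      · have : 1 ≤ (c₂ - c₃)^2 := by
          have : c₂ - c₃ ≠ 0 := sub_ne_zero.mpr hc
          have := Int.one_le_abs this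
          nlinarith [sq_abs (c₂ - c₃)]
        nlinarith [sq_nonneg (c₁ - c₂), sq_nonneg (c₁ - c₃)]
  have key2 : 3 ≤ 3*(c₁^2+c₂^2+c₃^2) + 2*(c₁*c₂+c₂*c₃+c₁*c₃) := by
    by_cases hc : c₁ + c₂ = 0 ∧ c₂ + c₃ = 0
    · obtain ⟨e1, e2⟩ := hc
      have hne : c₂ ≠ 0 := by
        intro hz; apply h00; constructor <;> omega
      have e3 : c₁ = -c₂ := by omega
      have e4 : c₃ = -c₂ := by omega
      have := Int.one_le_abs hne
      subst e3 e4
      nlinarith [sq_abs c₂]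
    · rcases not_and_or.mp hc with hc | hc
      · have : 1 ≤ (c₁ + c₂)^2 := by
          have := Int.one_le_abs hc
          nlinarith [sq_abs (c₁ + c₂)]
        nlinarith [sq_nonneg (c₂ + c₃), sq_nonneg (c₁ + c₃)]
      · have : 1 ≤ (c₂ + c₃)^2 := by
          have := Int.one_le_abs hc
          nlinarith [sq_abs (c₂ + c₃)]
        nlinarith [sq_nonneg (c₁ + c₂), sq_nonneg (c₁ + c₃)]
  set P : ℤ := c₁*c₂ + c₂*c₃ + c₁*c₃ with hP
  have hPa : 2 * |P| ≤ 3*(c₁^2+c₂^2+c₃^2) - 3 := by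
    rcases abs_cases P with ⟨he, -⟩ | ⟨he, -⟩ <;> rw [he] <;> linarith
  -- cast to ℝ
  have hQR : (2:ℝ) ≤ (c₁:ℝ)^2 + (c₂:ℝ)^2 + (c₃:ℝ)^2 := by exact_mod_cast hQ
  have hPaR : 2 * |(P:ℝ)| ≤ 3*((c₁:ℝ)^2 + (c₂:ℝ)^2 + (c₃:ℝ)^2) - 3 := by
    have hc : ((|P|:ℤ):ℝ) = |(P:ℝ)| := by push_cast; ring
    rw [← hc]; exact_mod_cast hPa
  have hgoal : ((c₁:ℝ)*c₂ + c₂*c₃ + c₁*c₃) = (P:ℝ) := by rw [hP]; push_cast; ring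
  rw [hgoal]
  by_cases hP0 : P = 0
  · rw [hP0]; push_cast; nlinarith
  · have h1P : (1:ℝ) ≤ |(P:ℝ)| := by
      have hc : ((|P|:ℤ):ℝ) = |(P:ℝ)| := by push_cast; ring
      rw [← hc]; exact_mod_cast Int.one_le_abs hP0
    have hpb : -(|(P:ℝ)| * |B|) ≤ (P:ℝ) * B := by
      rw [← abs_mul]; exact neg_abs_le _
    have hprod : |(P:ℝ)| * |B| < |(P:ℝ)| * (A/3) :=
      mul_lt_mul_of_pos_left hBlt (by linarith)
    have hnn : 0 ≤ (3*((c₁:ℝ)^2 + (c₂:ℝ)^2 + (c₃:ℝ)^2) - 3 - 2*|(P:ℝ)|) * A :=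
      mul_nonneg (by linarith) hApos.le
    nlinarith
end

section
/- For rational (or real) numbers r, s: 1 + r² + s² ≥ |r + s + rs| whenever |r| ≥ 1 and |s| ≥ 1; and if additionally at least one of r, s is ≤ 0, then 1 + r² + s² ≥ 2|r + s + rs|. -/
/-- For real r, s with |r| ≥ 1 and |s| ≥ 1: 1 + r² + s² ≥ |r + s + rs|;
and if additionally at least one of r, s is ≤ 0, then 1 + r² + s² ≥ 2|r + s + rs|. -/
theorem stmt_12 (r s : ℝ) (hr : 1 ≤ |r|) (hs : 1 ≤ |s|) :
    |r + s + r * s| ≤ 1 + r ^ 2 + s ^ 2 ∧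
    ((r ≤ 0 ∨ s ≤ 0) → 2 * |r + s + r * s| ≤ 1 + r ^ 2 + s ^ 2) := by
  rcases le_abs.mp hr with h1 | h1 <;> rcases le_abs.mp hs with h2 | h2
  · refine ⟨abs_le.2 ⟨by nlinarith [sq_nonneg (r+s+1), sq_nonneg (r-1), sq_nonneg (s-1)],
      by nlinarith [sq_nonneg (r+s-1), sq_nonneg (r-s)]⟩, fun h => ?_⟩
    rcases h with h | h <;> linarith
  · refine ⟨abs_le.2 ⟨?_, ?_⟩, fun _ => ?_⟩
    · nlinarith [sq_nonneg (r+s+1), mul_nonneg (by linarith : (0:ℝ) ≤ r - 1) (by linarith : (0:ℝ) ≤ -s - 1)]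
    · nlinarith [sq_nonneg (r+s-1), mul_nonneg (by linarith : (0:ℝ) ≤ r - 1) (by linarith : (0:ℝ) ≤ -s - 1)]
    · rcases abs_cases (r + s + r * s) with ⟨e, _⟩ | ⟨e, _⟩ <;> rw [e] <;>
      nlinarith [sq_nonneg (r+s+1), sq_nonneg (r+s-1), sq_nonneg (r-1), sq_nonneg (s+1),
        mul_nonneg (by linarith : (0:ℝ) ≤ r - 1) (by linarith : (0:ℝ) ≤ -s - 1)]
  · refine ⟨abs_le.2 ⟨?_, ?_⟩, fun _ => ?_⟩
    · nlinarith [sq_nonneg (r+s+1), mul_nonneg (by linarith : (0:ℝ) ≤ -r - 1) (by linarith : (0:ℝ) ≤ s - 1)]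
    · nlinarith [sq_nonneg (r+s-1), mul_nonneg (by linarith : (0:ℝ) ≤ -r - 1) (by linarith : (0:ℝ) ≤ s - 1)]
    · rcases abs_cases (r + s + r * s) with ⟨e, _⟩ | ⟨e, _⟩ <;> rw [e] <;>
      nlinarith [sq_nonneg (r+s+1), sq_nonneg (r+s-1), sq_nonneg (r+1), sq_nonneg (s-1),
        mul_nonneg (by linarith : (0:ℝ) ≤ -r - 1) (by linarith : (0:ℝ) ≤ s - 1)]
  · refine ⟨abs_le.2 ⟨?_, ?_⟩, fun _ => ?_⟩
    · nlinarith [sq_nonneg (r+s+1), mul_nonneg (by linarith : (0:ℝ) ≤ -r - 1) (by linarith : (0:ℝ) ≤ -s - 1)]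
    · nlinarith [sq_nonneg (r+s-1), mul_nonneg (by linarith : (0:ℝ) ≤ -r - 1) (by linarith : (0:ℝ) ≤ -s - 1)]
    · rcases abs_cases (r + s + r * s) with ⟨e, _⟩ | ⟨e, _⟩ <;> rw [e] <;>
      nlinarith [sq_nonneg (r+s+1), sq_nonneg (r+s-1), sq_nonneg (r+1), sq_nonneg (s+1), sq_nonneg (r-s),
        mul_nonneg (by linarith : (0:ℝ) ≤ -r - 1) (by linarith : (0:ℝ) ≤ -s - 1)]
end

section
/- Let f(x) = xⁿ + a_{n-1}x^{n-1} + ... + a₁x + a₀ ∈ ℤ[x] with |a_{n-1}| > 1 + |a_{n-2}| + ... + |a₁| + |a₀| and a₀ ≠ 0. Then f has exactly one root of absolute value > 1 and all other roots have absolute value < 1; in particular f(x) is irreducible over ℚ (Perron's criterion). -/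
open Polynomial Finset

lemma aux_prod_le_one (s : Multiset ℝ) (h0 : ∀ x ∈ s, 0 ≤ x) (h1 : ∀ x ∈ s, x ≤ 1) :
    s.prod ≤ 1 := by
  induction s using Multiset.induction_on with
  | empty => simp
  | cons a t ih =>
    rw [Multiset.prod_cons]
    have ha0 : 0 ≤ a := h0 a (Multiset.mem_cons_self a t)
    have ha1 : a ≤ 1 := h1 a (Multiset.mem_cons_self a t)
    have ht0 : 0 ≤ t.prod := Multiset.prod_nonneg fun x hx => h0 x (Multiset.mem_cons_of_mem hx)
    have ht1 : t.prod ≤ 1 := ih (fun x hx => h0 x (Multiset.mem_cons_of_mem hx))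
      (fun x hx => h1 x (Multiset.mem_cons_of_mem hx))
    calc a * t.prod ≤ 1 * 1 := mul_le_mul ha1 ht1 ht0 zero_le_one
    _ = 1 := by ring

lemma aux_exists_one_le (s : Multiset ℝ) (h0 : ∀ x ∈ s, 0 ≤ x) (hne : s ≠ 0)
    (hp : 1 ≤ s.prod) : ∃ x ∈ s, 1 ≤ x := by
  by_contra h
  push_neg at h
  obtain ⟨a, ha⟩ := Multiset.exists_mem_of_ne_zero hne
  obtain ⟨t, rfl⟩ : ∃ t, s = a ::ₘ t := ⟨s.erase a, (Multiset.cons_erase ha).symm⟩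
  rw [Multiset.prod_cons] at hp
  have ha0 : 0 ≤ a := h0 a (Multiset.mem_cons_self a t)
  have ha1 : a < 1 := h a (Multiset.mem_cons_self a t)
  have ht0 : 0 ≤ t.prod := Multiset.prod_nonneg fun x hx => h0 x (Multiset.mem_cons_of_mem hx)
  have ht1 : t.prod ≤ 1 := aux_prod_le_one t (fun x hx => h0 x (Multiset.mem_cons_of_mem hx))
    (fun x hx => (h x (Multiset.mem_cons_of_mem hx)).le)
  nlinarith


lemma perron_root_gt (m : ℕ) (F : ℂ[X]) (hF : F.Monic) (hd : F.natDegree = m + 2)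
    (hP : 1 + ∑ k ∈ range (m+1), ‖F.coeff k‖ < ‖F.coeff (m+1)‖)
    (z : ℂ) (hz : F.eval z = 0) (hz1 : 1 ≤ ‖z‖) : 1 < ‖z‖ := by
  set r := ‖z‖ with hr
  have hr0 : (0:ℝ) < r := lt_of_lt_of_le one_pos hz1
  have hlead : F.coeff (m+2) = 1 := by rw [← hd]; exact hF.coeff_natDegree
  have hev := Polynomial.eval_eq_sum_range (p := F) z
  rw [hz, hd, Finset.sum_range_succ, Finset.sum_range_succ, hlead] at hev
  have key : z^(m+1) * (z + F.coeff (m+1)) = -∑ i ∈ range (m+1), F.coeff i * z^i := by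
    linear_combination -hev
  have h2 : r^(m+1) * ‖z + F.coeff (m+1)‖
      = ‖∑ i ∈ range (m+1), F.coeff i * z^i‖ := by
    rw [← norm_pow, ← norm_mul, key, norm_neg]
  have h3 : ‖∑ i ∈ range (m+1), F.coeff i * z^i‖
      ≤ (∑ i ∈ range (m+1), ‖F.coeff i‖) * r^m := by
    refine le_trans (norm_sum_le _ _) ?_
    rw [Finset.sum_mul]
    refine Finset.sum_le_sum fun i hi => ?_
    rw [norm_mul, norm_pow]
    exact mul_le_mul_of_nonneg_left
      (pow_le_pow_right₀ hz1 (by have := Finset.mem_range.mp hi; omega : i ≤ m)) (norm_nonneg _)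
  set S := ∑ i ∈ range (m+1), ‖F.coeff i‖ with hS
  set X := ‖z + F.coeff (m+1)‖ with hX
  have hX0 : 0 ≤ X := norm_nonneg _
  have h4 : r * X ≤ S := by
    have : r^m * (r * X) ≤ r^m * S := by
      calc r^m * (r * X) = r^(m+1) * X := by ring
      _ ≤ S * r^m := h2 ▸ h3
      _ = r^m * S := by ring
    exact le_of_mul_le_mul_left this (pow_pos hr0 m)
  have h5 : X ≤ S := le_trans (le_mul_of_one_le_left hX0 hz1) h4
  have h6 : ‖F.coeff (m+1)‖ ≤ X + r := by
    calc ‖F.coeff (m+1)‖ = ‖(z + F.coeff (m+1)) + (-z)‖ := by ring_nf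
    _ ≤ ‖z + F.coeff (m+1)‖ + ‖-z‖ := norm_add_le _ _
    _ = X + r := by rw [norm_neg]
  linarith


lemma perron_quot_small (m : ℕ) (F : ℂ[X]) (hF : F.Monic) (hd : F.natDegree = m + 2)
    (hP : 1 + ∑ k ∈ range (m+1), ‖F.coeff k‖ < ‖F.coeff (m+1)‖)
    (z : ℂ) (hz : F.eval z = 0) (hz1 : 1 < ‖z‖) (w : ℂ)
    (hw : (F /ₘ (X - C z)).eval w = 0) : ‖w‖ < 1 := by
  set r := ‖z‖ with hr
  set g := F /ₘ (X - C z) with hg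
  have hfac : (X - C z) * g = F := (mul_divByMonic_eq_iff_isRoot).mpr hz
  clear_value g
  have hgm : g.Monic := Monic.of_mul_monic_left (monic_X_sub_C z) (hfac ▸ hF)
  have hgne : g ≠ 0 := hgm.ne_zero
  have hdeg_g : g.natDegree = m + 1 := by
    have h := natDegree_mul (X_sub_C_ne_zero z) hgne
    rw [hfac, hd, natDegree_X_sub_C] at h
    omega
  have htop : g.coeff (m+1) = 1 := by rw [← hdeg_g]; exact hgm.coeff_natDegree
  have hco : ∀ j, F.coeff (j+1) = g.coeff j - z * g.coeff (j+1) := by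
    intro j
    rw [← hfac, sub_mul]
    simp [coeff_X_mul, coeff_C_mul]
  have hco0 : F.coeff 0 = -(z * g.coeff 0) := by
    rw [← hfac, mul_coeff_zero]
    simp
  -- key sum bound
  set B : ℕ → ℝ := fun j => ‖g.coeff j‖ with hB
  set S := ∑ j ∈ range (m+1), B j with hS
  have hB0 : ∀ j, 0 ≤ B j := fun j => norm_nonneg _
  have hS0 : 0 ≤ S := Finset.sum_nonneg fun j _ => hB0 j
  have hA0 : ‖F.coeff 0‖ = r * B 0 := by
    rw [hco0, norm_neg, norm_mul]
  have hAj : ∀ j, r * B (j+1) - B j ≤ ‖F.coeff (j+1)‖ := by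
    intro j
    rw [hco j]
    have h1 : ‖z * g.coeff (j+1)‖ ≤
        ‖g.coeff j - z * g.coeff (j+1)‖ + ‖g.coeff j‖ := by
      calc ‖z * g.coeff (j+1)‖
          = ‖-(g.coeff j - z * g.coeff (j+1)) + g.coeff j‖ := by ring_nf
        _ ≤ ‖-(g.coeff j - z * g.coeff (j+1))‖ + ‖g.coeff j‖ :=
            norm_add_le _ _
        _ = _ := by rw [norm_neg]
    rw [norm_mul] at h1
    simp only [hB]
    linarith
  have hsum : (r - 1) * S + B m ≤ ∑ k ∈ range (m+1), ‖F.coeff k‖ := by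
    rw [Finset.sum_range_succ' (fun k => ‖F.coeff k‖) m]
    have h2 : ∑ j ∈ range m, (r * B (j+1) - B j) ≤
        ∑ j ∈ range m, ‖F.coeff (j+1)‖ :=
      Finset.sum_le_sum fun j _ => hAj j
    have h3 : ∑ j ∈ range m, (r * B (j+1) - B j)
        = r * (S - B 0) - (S - B m) := by
      rw [Finset.sum_sub_distrib, ← Finset.mul_sum]
      have e1 : ∑ j ∈ range m, B (j+1) = S - B 0 := by
        rw [hS, Finset.sum_range_succ' B m]; ring
      have e2 : ∑ j ∈ range m, B j = S - B m := by
        rw [hS, Finset.sum_range_succ B m]; ring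
      rw [e1, e2]
    rw [hA0]
    nlinarith [hB0 0]
  have hAm : ‖F.coeff (m+1)‖ ≤ B m + r := by
    rw [hco m, htop, mul_one, sub_eq_add_neg]
    calc ‖g.coeff m + -z‖ ≤ ‖g.coeff m‖ + ‖-z‖ :=
          norm_add_le _ _
      _ = B m + r := by rw [norm_neg]
  have hSlt : S < 1 := by
    have : (r - 1) * S < r - 1 := by linarith
    have hr1 : 0 < r - 1 := by linarith
    nlinarith
  -- now bound the root w
  by_contra hcon
  push_neg at hcon
  set t := ‖w‖ with ht
  have ht0 : (0:ℝ) < t := lt_of_lt_of_le one_pos hcon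
  have hev := Polynomial.eval_eq_sum_range (p := g) w
  rw [hw, hdeg_g, Finset.sum_range_succ, htop, one_mul] at hev
  have key : w^(m+1) = -∑ i ∈ range (m+1), g.coeff i * w^i := by linear_combination -hev
  have h5 : t^(m+1) ≤ S * t^m := by
    calc t^(m+1) = ‖w^(m+1)‖ := by rw [norm_pow]
      _ = ‖∑ i ∈ range (m+1), g.coeff i * w^i‖ := by
          rw [key, norm_neg]
      _ ≤ ∑ i ∈ range (m+1), ‖g.coeff i * w^i‖ := norm_sum_le _ _
      _ ≤ ∑ i ∈ range (m+1), B i * t^m := by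
          refine Finset.sum_le_sum fun i hi => ?_
          rw [norm_mul, norm_pow]
          exact mul_le_mul_of_nonneg_left
            (pow_le_pow_right₀ hcon (by have := Finset.mem_range.mp hi; omega : i ≤ m))
            (norm_nonneg _)
      _ = S * t^m := by rw [hS, Finset.sum_mul]
  have h6 : t^(m+1) = t * t^m := by ring
  have h7 : 0 < t^m := pow_pos ht0 m
  nlinarith

lemma factor_has_big_root (F : ℂ[X]) (hFne : F ≠ 0)
    (hbig : ∀ z : ℂ, F.eval z = 0 → 1 ≤ ‖z‖ → 1 < ‖z‖)
    (p : ℤ[X]) (hpd : p.natDegree ≠ 0) (hlc : IsUnit p.leadingCoeff) (h0 : p.coeff 0 ≠ 0)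
    (hdvd : (p.map (algebraMap ℤ ℂ)) ∣ F) :
    ∃ z ∈ (p.map (algebraMap ℤ ℂ)).roots, 1 < ‖z‖ := by
  set P := p.map (algebraMap ℤ ℂ) with hP
  have hinj : Function.Injective (algebraMap ℤ ℂ) := Int.cast_injective
  have hpne : p ≠ 0 := fun h => h0 (by simp [h])
  have hPne : P ≠ 0 := by
    intro h
    exact hpne (Polynomial.map_injective _ hinj (by rw [hP] at h; simpa using h))
  have hPd : P.natDegree = p.natDegree := natDegree_map_eq_of_injective hinj p
  have hsplit : Splits P := IsAlgClosed.splits P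
  have hcard : P.roots.card = p.natDegree := by
    rw [← hPd]; exact (splits_iff_card_roots.mp hsplit)
  -- |leading coeff| = 1
  have hlcP : ‖P.leadingCoeff‖ = 1 := by
    rw [hP, leadingCoeff_map_of_injective hinj]
    rcases Int.isUnit_iff.mp hlc with h | h <;> simp [h]
  -- |coeff 0| = |lead| * prod of |roots|
  have habs0 : ‖P.coeff 0‖ = (P.roots.map (fun z => ‖z‖)).prod := by
    conv_lhs => rw [coeff_zero_eq_eval_zero, hsplit.eq_prod_roots]
    rw [eval_mul, eval_C, eval_multiset_prod, Multiset.map_map, norm_mul, hlcP, one_mul,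
      show ∀ s : Multiset ℂ, ‖s.prod‖ = (s.map (fun z => ‖z‖)).prod from
        fun s => map_multiset_prod (normHom : ℂ →*₀ ℝ) s, Multiset.map_map]
    congr 1
    apply Multiset.map_congr rfl
    intro x _
    simp
  have h1le : (1:ℝ) ≤ ‖P.coeff 0‖ := by
    rw [hP, coeff_map, algebraMap_int_eq, eq_intCast, Complex.norm_intCast, ← Int.cast_abs]
    exact_mod_cast Int.one_le_abs h0
  have hne : P.roots.map (fun z => ‖z‖) ≠ 0 := by
    intro h
    have : P.roots = 0 := by simpa using h
    rw [this] at hcard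
    simp at hcard
    omega
  obtain ⟨x, hx, hx1⟩ := aux_exists_one_le (P.roots.map (fun z => ‖z‖))
    (by intro x hx; obtain ⟨z, _, rfl⟩ := Multiset.mem_map.mp hx; exact norm_nonneg z)
    hne (habs0 ▸ h1le)
  obtain ⟨z, hzmem, rfl⟩ := Multiset.mem_map.mp hx
  refine ⟨z, hzmem, ?_⟩
  obtain ⟨Q, rfl⟩ := hdvd
  have hzP : P.eval z = 0 := (mem_roots hPne).mp hzmem
  exact hbig z (by rw [eval_mul, hzP, zero_mul]) hx1

/-- Perron's criterion: If f = xⁿ + a_{n-1}x^{n-1} + ... + a₀ ∈ ℤ[x] with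
|a_{n-1}| > 1 + |a_{n-2}| + ... + |a₀| and a₀ ≠ 0, then f has exactly one complex root of
absolute value > 1 (with multiplicity), all other roots have absolute value < 1, and f is
irreducible over ℚ. -/
theorem stmt_16 (n : ℕ) (hn : 2 ≤ n) (f : Polynomial ℤ) (hmonic : f.Monic)
    (hdeg : f.natDegree = n) (ha0 : f.coeff 0 ≠ 0)
    (hperron : 1 + ∑ k ∈ Finset.range (n - 1), |f.coeff k| < |f.coeff (n - 1)|) :
    (((f.map (algebraMap ℤ ℂ)).roots.filter (fun z => 1 < ‖z‖)).card = 1) ∧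
    (∀ z ∈ (f.map (algebraMap ℤ ℂ)).roots, 1 < ‖z‖ ∨ ‖z‖ < 1) ∧
    Irreducible (f.map (algebraMap ℤ ℚ)) := by
  obtain ⟨m, rfl⟩ : ∃ m, n = m + 2 := ⟨n - 2, by omega⟩
  set F := f.map (algebraMap ℤ ℂ) with hFdef
  have hinj : Function.Injective (algebraMap ℤ ℂ) := Int.cast_injective
  have hFm : F.Monic := hmonic.map _
  have hFne : F ≠ 0 := hFm.ne_zero
  have hFd : F.natDegree = m + 2 := by
    rw [hFdef, hmonic.natDegree_map, hdeg]
  have habs : ∀ k, ‖F.coeff k‖ = ((|f.coeff k| : ℤ) : ℝ) := by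
    intro k
    rw [hFdef, coeff_map, algebraMap_int_eq, eq_intCast, Complex.norm_intCast, ← Int.cast_abs]
  have hP : 1 + ∑ k ∈ Finset.range (m+1), ‖F.coeff k‖
      < ‖F.coeff (m+1)‖ := by
    have h1 : m + 2 - 1 = m + 1 := by omega
    rw [h1] at hperron
    simp only [habs]
    rw [← Int.cast_sum, ← Int.cast_one, ← Int.cast_add]
    exact_mod_cast hperron
  have hbig : ∀ z : ℂ, F.eval z = 0 → 1 ≤ ‖z‖ → 1 < ‖z‖ :=
    fun z hz h1 => perron_root_gt m F hFm hFd hP z hz h1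
  -- existence of a root of absolute value > 1
  have hsplit : Splits F := IsAlgClosed.splits F
  have hcard : F.roots.card = m + 2 := by rw [splits_iff_card_roots.mp hsplit, hFd]
  obtain ⟨z, hzmem, hzgt⟩ : ∃ z ∈ F.roots, 1 < ‖z‖ := by
    obtain ⟨z, hzmem, hzge⟩ := factor_has_big_root F hFne hbig f (by omega)
      (by rw [hmonic]; exact isUnit_one) ha0 dvd_rfl
    exact ⟨z, hzmem, hzge⟩
  have hzev : F.eval z = 0 := (mem_roots hFne).mp hzmem
  set g := F /ₘ (X - C z) with hg
  have hfac : (X - C z) * g = F := (mul_divByMonic_eq_iff_isRoot).mpr hzev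
  have hsmall : ∀ w, g.eval w = 0 → ‖w‖ < 1 :=
    fun w hw => perron_quot_small m F hFm hFd hP z hzev hzgt w hw
  clear_value g
  have hgne : g ≠ 0 := by
    intro h; rw [h, mul_zero] at hfac; exact hFne hfac.symm
  have hroots : F.roots = z ::ₘ g.roots := by
    rw [← hfac, roots_mul (hfac.symm ▸ hFne), roots_X_sub_C, Multiset.singleton_add]
  have hgfilter : g.roots.filter (fun w => 1 < ‖w‖) = 0 := by
    rw [Multiset.filter_eq_nil]
    intro w hw
    exact not_lt.mpr (hsmall w ((mem_roots hgne).mp hw)).le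
  have part1 : ((F.roots.filter (fun w => 1 < ‖w‖)).card = 1) := by
    have e : Multiset.filter (fun w => 1 < ‖w‖) (z ::ₘ g.roots) = {z} := by
      rw [Multiset.filter_cons, hgfilter, add_zero, if_pos hzgt]
    rw [hroots, e, Multiset.card_singleton]
  refine ⟨part1, ?_, ?_⟩
  · intro w hw
    rw [hroots, Multiset.mem_cons] at hw
    rcases hw with rfl | hw
    · exact Or.inl hzgt
    · exact Or.inr (hsmall w ((mem_roots hgne).mp hw))
  -- irreducibility
  · rw [algebraMap_int_eq]
    refine (Polynomial.IsPrimitive.Int.irreducible_iff_irreducible_map_cast hmonic.isPrimitive).mp ?_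
    constructor
    · intro hu
      have := natDegree_eq_zero_of_isUnit hu
      omega
    · intro p q hpq
      have hlc : p.leadingCoeff * q.leadingCoeff = 1 := by
        have h := hmonic
        rw [hpq, Monic, leadingCoeff_mul] at h
        exact h
      have hpu : IsUnit p.leadingCoeff := IsUnit.of_mul_eq_one _ hlc
      have hqu : IsUnit q.leadingCoeff := IsUnit.of_mul_eq_one _ (by rw [mul_comm]; exact hlc)
      by_cases hp0 : p.natDegree = 0
      · left
        obtain ⟨a, rfl⟩ := natDegree_eq_zero.mp hp0
        exact isUnit_C.mpr (by rw [← Polynomial.leadingCoeff_C a]; exact hpu)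
      by_cases hq0 : q.natDegree = 0
      · right
        obtain ⟨a, rfl⟩ := natDegree_eq_zero.mp hq0
        exact isUnit_C.mpr (by rw [← Polynomial.leadingCoeff_C a]; exact hqu)
      exfalso
      have hc0 : f.coeff 0 = p.coeff 0 * q.coeff 0 := by rw [hpq, mul_coeff_zero]
      have hpc0 : p.coeff 0 ≠ 0 := fun h => ha0 (by rw [hc0, h, zero_mul])
      have hqc0 : q.coeff 0 ≠ 0 := fun h => ha0 (by rw [hc0, h, mul_zero])
      have hpdvd : (p.map (algebraMap ℤ ℂ)) ∣ F := by
        rw [hFdef, hpq, Polynomial.map_mul]; exact Dvd.intro _ rfl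
      have hqdvd : (q.map (algebraMap ℤ ℂ)) ∣ F := by
        rw [hFdef, hpq, Polynomial.map_mul]; exact Dvd.intro_left _ rfl
      obtain ⟨zp, hzp, hzp1⟩ := factor_has_big_root F hFne hbig p hp0 hpu hpc0 hpdvd
      obtain ⟨zq, hzq, hzq1⟩ := factor_has_big_root F hFne hbig q hq0 hqu hqc0 hqdvd
      have hFroots : F.roots = (p.map (algebraMap ℤ ℂ)).roots + (q.map (algebraMap ℤ ℂ)).roots := by
        rw [hFdef, hpq, Polynomial.map_mul]
        exact roots_mul (by rw [← Polynomial.map_mul, ← hpq, ← hFdef]; exact hFne)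
      have hp1 : 0 < ((p.map (algebraMap ℤ ℂ)).roots.filter (fun w => 1 < ‖w‖)).card :=
        Multiset.card_pos_iff_exists_mem.mpr ⟨zp, Multiset.mem_filter.mpr ⟨hzp, hzp1⟩⟩
      have hq1 : 0 < ((q.map (algebraMap ℤ ℂ)).roots.filter (fun w => 1 < ‖w‖)).card :=
        Multiset.card_pos_iff_exists_mem.mpr ⟨zq, Multiset.mem_filter.mpr ⟨hzq, hzq1⟩⟩
      have h2le : (F.roots.filter (fun w => 1 < ‖w‖)).card =
          ((p.map (algebraMap ℤ ℂ)).roots.filter (fun w => 1 < ‖w‖)).card +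
          ((q.map (algebraMap ℤ ℂ)).roots.filter (fun w => 1 < ‖w‖)).card := by
        rw [hFroots, Multiset.filter_add, Multiset.card_add]
      omega
end
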